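/- arXiv:1603.04605 — 9 statements merged into one kernel-verified Lean document; each statement's English description precedes it below -/
import Mathlib

section
/- If 0 < δ ≤ min_i dⁱ and the weight vector w ∈ ℝ^q has nonnegative entries and satisfies the recentering condition Cᵀ·diag(1/d¹,…,1/d^q)·(𝟙+w) = 0, then the recentered relaxed barrier function satisfies the global quadratic upper bound B̂_P(ξ) ≤ ξᵀ M ξ for all ξ ∈ ℝ^r, where M = (1/(2δ²))·Cᵀ·diag(1+w¹,…,1+w^q)·C. -/
open Matrix

/-- The relaxed logarithmic barrier function with relaxation parameter `δ`. -/
noncomputable def Bhat (δ z : ℝ) : ℝ :=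
  if δ < z then -Real.log z
  else (1 / 2) * (((z - 2 * δ) / δ) ^ 2 - 1) - Real.log δ

/-- The (weighting-)recentered relaxed logarithmic barrier function for the polytope
`P = {ξ : C ξ ≤ d}`:  `B̂_P(ξ) = Σ_i (1 + wⁱ)(B̂(−Cⁱξ + dⁱ) + ln dⁱ)`. -/
noncomputable def BhatP {q r : ℕ} (δ : ℝ) (C : Matrix (Fin q) (Fin r) ℝ)
    (d w : Fin q → ℝ) (ξ : Fin r → ℝ) : ℝ :=
  ∑ i, (1 + w i) * (Bhat δ (-(C.mulVec ξ i) + d i) + Real.log (d i))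

/-- `log t ≤ (t² - 1)/(2t)` for `t ≥ 1`. -/
lemma aux_log_upper {t : ℝ} (ht : 1 ≤ t) : Real.log t ≤ (t^2 - 1) / (2*t) := by
  have ht0 : 0 < t := by linarith
  have h1 : Real.log t ≤ Real.sinh (Real.log t) :=
    Real.self_le_sinh_iff.mpr (Real.log_nonneg ht)
  rw [Real.sinh_log ht0] at h1
  have : (t - t⁻¹)/2 = (t^2 - 1)/(2*t) := by field_simp
  linarith [h1, this ▸ h1]

/-- `(s-1) - (s-1)²/2 ≤ log s` for `s ≥ 1`. -/
lemma aux_log_lower {s : ℝ} (hs : 1 ≤ s) : (s-1) - (s-1)^2/2 ≤ Real.log s := by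
  set f : ℝ → ℝ := fun x => Real.log x - (x-1) + (x-1)^2/2 with hf
  have key : MonotoneOn f (Set.Ici 1) := by
    have hderiv : ∀ x ∈ interior (Set.Ici (1:ℝ)), HasDerivAt f (x⁻¹ - 1 + (x-1)) x := by
      intro x hx
      rw [interior_Ici] at hx
      have hx0 : x ≠ 0 := by have : (1:ℝ) < x := hx; linarith
      have h1 : HasDerivAt Real.log x⁻¹ x := Real.hasDerivAt_log hx0
      have h2 : HasDerivAt (fun x : ℝ => (x-1)) 1 x := (hasDerivAt_id x).sub_const 1
      have h3 : HasDerivAt (fun x : ℝ => (x-1)^2/2) ((2 * (x-1)^(2-1) * 1)/2) x :=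
        (h2.pow 2).div_const 2
      have := (h1.sub h2).add h3
      have e : x⁻¹ - 1 + (x-1) = x⁻¹ - 1 + 2 * (x - 1) ^ (2 - 1) * 1 / 2 := by
        rw [show (2:ℕ) - 1 = 1 from rfl]; ring
      rw [e]; exact this
    apply monotoneOn_of_deriv_nonneg (convex_Ici 1)
    · apply ContinuousOn.add (ContinuousOn.sub ?_ (by fun_prop)) (by fun_prop)
      apply Real.continuousOn_log.mono
      intro x hx; simp at hx ⊢; linarith
    · intro x hx
      exact (hderiv x hx).differentiableAt.differentiableWithinAt
    · intro x hx
      rw [(hderiv x hx).deriv]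
      rw [interior_Ici] at hx
      have hx1 : (1:ℝ) < x := hx
      have : x⁻¹ - 1 + (x-1) = (x-1)^2/x := by field_simp; ring
      rw [this]
      positivity
  have h1 : f 1 ≤ f s := key (by simp) hs hs
  simp only [hf] at h1
  simp at h1
  linarith [h1]

/-- Pointwise quadratic upper bound on the recentered relaxed barrier term. -/
lemma pointwise_bound (δ d z : ℝ) (hδ : 0 < δ) (hδd : δ ≤ d) :
    Bhat δ z + Real.log d ≤ (d - z)/d + (d - z)^2/(2*δ^2) := by
  have hd0 : 0 < d := lt_of_lt_of_le hδ hδd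
  unfold Bhat
  split_ifs with h
  · -- δ < z
    have hz0 : 0 < z := lt_trans hδ h
    rcases le_or_gt z d with hzd | hzd
    · -- z ≤ d : use log(d/z) ≤ ((d/z)²-1)/(2(d/z))
      have ht : 1 ≤ d / z := (one_le_div hz0).mpr hzd
      have hlog := aux_log_upper ht
      rw [Real.log_div (ne_of_gt hd0) (ne_of_gt hz0)] at hlog
      have heq : ((d/z)^2 - 1)/(2*(d/z)) = (d^2 - z^2)/(2*d*z) := by
        field_simp
      rw [heq] at hlog
      have key : (d^2 - z^2)/(2*d*z) ≤ (d - z)/d + (d - z)^2/(2*δ^2) := by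
        rw [div_add_div _ _ (ne_of_gt hd0) (by positivity), div_le_div_iff₀ (by positivity) (by positivity)]
        have hdz : δ^2 ≤ d * z := by nlinarith
        nlinarith [mul_nonneg (sq_nonneg (d - z)) (sub_nonneg.mpr hdz), mul_pos hd0 hz0, sq_nonneg (d-z)]
      linarith
    · -- d < z : use log(z/d) ≥ (z/d - 1) - (z/d - 1)²/2
      have hs : 1 ≤ z / d := le_of_lt ((one_lt_div hd0).mpr hzd)
      have hlog := aux_log_lower hs
      rw [Real.log_div (ne_of_gt hz0) (ne_of_gt hd0)] at hlog
      have key : -((z/d - 1) - (z/d - 1)^2/2) ≤ (d - z)/d + (d - z)^2/(2*δ^2) := by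
        have h1 : (z/d - 1) = (z - d)/d := by
          rw [eq_div_iff hd0.ne']; field_simp
        rw [h1]
        have h3 : ((z-d)/d)^2/2 ≤ (d-z)^2/(2*δ^2) := by
          rw [div_pow, div_div, div_le_div_iff₀ (by positivity) (by positivity)]
          have hdd : δ^2 ≤ d^2 := by nlinarith
          nlinarith [mul_le_mul_of_nonneg_left hdd (sq_nonneg (z-d))]
        have h4 : -((z - d)/d) = (d - z)/d := by ring
        linarith
      linarith
  · -- z ≤ δ
    push_neg at h
    have hlog : Real.log d - Real.log δ ≤ (d^2 - δ^2)/(2*d*δ) := by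
      have ht : 1 ≤ d / δ := (one_le_div hδ).mpr hδd
      have := aux_log_upper ht
      rw [Real.log_div (ne_of_gt hd0) (ne_of_gt hδ)] at this
      have heq : ((d/δ)^2 - 1)/(2*(d/δ)) = (d^2 - δ^2)/(2*d*δ) := by
        field_simp
      linarith [heq ▸ this]
    have key : (1/2) * (((z - 2*δ)/δ)^2 - 1) + (d^2 - δ^2)/(2*d*δ) ≤ (d - z)/d + (d - z)^2/(2*δ^2) := by
      rw [← sub_nonneg]
      have expand : (d - z)/d + (d - z)^2/(2*δ^2) - ((1/2) * (((z - 2*δ)/δ)^2 - 1) + (d^2 - δ^2)/(2*d*δ))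
          = ((d-δ)^2*(d+δ-2*z)) / (2*δ^2*d) := by
        field_simp; ring
      rw [expand]
      apply div_nonneg _ (by positivity)
      have : 0 ≤ d + δ - 2*z := by linarith
      positivity
    linarith

/-- If `0 < δ ≤ min_i dⁱ`, the weights `w` are nonnegative and satisfy the recentering
condition `Cᵀ diag(1/d¹,…,1/d^q)(𝟙 + w) = 0`, then the recentered relaxed barrier function
satisfies the global quadratic bound `B̂_P(ξ) ≤ ξᵀ M ξ` with
`M = (1/(2δ²)) Cᵀ diag(1+w¹,…,1+w^q) C`. -/
theorem recentered_relaxed_barrier_quadratic_upper_bound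
    {q r : ℕ} (δ : ℝ) (C : Matrix (Fin q) (Fin r) ℝ) (d w : Fin q → ℝ)
    (hδ : 0 < δ) (hδd : ∀ i, δ ≤ d i)
    (hd : ∀ i, 0 < d i) (hw : ∀ i, 0 ≤ w i)
    (hrecenter : Cᵀ.mulVec (fun i => (1 / d i) * (1 + w i)) = 0) :
    ∀ ξ : Fin r → ℝ,
      BhatP δ C d w ξ ≤
        ξ ⬝ᵥ ((1 / (2 * δ ^ 2)) •
          (Cᵀ * Matrix.diagonal (fun i => 1 + w i) * C)).mulVec ξ := by
  intro ξ
  set u : Fin q → ℝ := C.mulVec ξ with hu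
  have hRHS : ξ ⬝ᵥ ((1 / (2 * δ ^ 2)) •
      (Cᵀ * Matrix.diagonal (fun i => 1 + w i) * C)).mulVec ξ
      = ∑ i, (1 + w i) * ((1/(2*δ^2)) * (u i)^2) := by
    rw [smul_mulVec, dotProduct_smul, ← mulVec_mulVec, ← mulVec_mulVec,
      dotProduct_mulVec, vecMul_transpose]
    simp only [smul_eq_mul, mulVec_diagonal, dotProduct, Finset.mul_sum, ← hu]
    exact Finset.sum_congr rfl (fun x _ => by ring)
  have hzero : ∑ i, (1 + w i) * ((u i)/(d i)) = 0 := by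
    have h0 : ξ ⬝ᵥ Cᵀ.mulVec (fun i => (1 / d i) * (1 + w i)) = 0 := by
      rw [hrecenter]; simp
    rw [dotProduct_mulVec, vecMul_transpose, ← hu] at h0
    rw [← h0]
    simp [dotProduct]
    exact Finset.sum_congr rfl (fun x _ => by field_simp)
  have hstep : BhatP δ C d w ξ ≤ ∑ i, (1 + w i) * ((u i)/(d i) + (1/(2*δ^2)) * (u i)^2) := by
    unfold BhatP
    apply Finset.sum_le_sum
    intro i _
    apply mul_le_mul_of_nonneg_left _ (by linarith [hw i])
    have hpb := pointwise_bound δ (d i) (-(u i) + d i) hδ (hδd i)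
    have e1 : d i - (-(u i) + d i) = u i := by ring
    rw [e1] at hpb
    have e2 : (u i)^2/(2*δ^2) = (1/(2*δ^2)) * (u i)^2 := by ring
    rw [e2] at hpb
    exact hpb
  rw [hRHS]
  have hsplit : ∑ i, (1 + w i) * ((u i)/(d i) + (1/(2*δ^2)) * (u i)^2)
      = (∑ i, (1 + w i) * ((u i)/(d i))) + ∑ i, (1 + w i) * ((1/(2*δ^2)) * (u i)^2) := by
    rw [← Finset.sum_add_distrib]
    exact Finset.sum_congr rfl (fun x _ => by ring)
  rw [hsplit, hzero, zero_add] at hstep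
  exact hstep
end

section
/- If the polytope P = {ξ ∈ ℝ^r : Cξ ≤ d} is compact (equivalently, Cξ ≤ 0 implies ξ = 0), 0 < δ ≤ min_i dⁱ, and the weight vector w ∈ ℝ^q has nonnegative entries and satisfies the recentering condition Cᵀ·diag(1/d¹,…,1/d^q)·(𝟙+w) = 0, then the recentered relaxed barrier function B̂_P is positive definite: B̂_P(0) = 0, its gradient vanishes at 0, and B̂_P(ξ) > 0 for every ξ ≠ 0. -/
open Matrix

lemma Bhat_at_d (δ d : ℝ) (hδ : 0 < δ) (hδd : δ ≤ d) : Bhat δ d = -Real.log d := by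
  unfold Bhat
  rcases lt_or_eq_of_le hδd with h | h
  · simp [h]
  · subst h
    rw [if_neg (lt_irrefl _)]
    have : (δ - 2 * δ) / δ = -1 := by field_simp; ring
    rw [this]; ring

lemma key_le (δ d z : ℝ) (hδ : 0 < δ) (hδd : δ ≤ d) :
    (d - z) / d ≤ Bhat δ z + Real.log d := by
  have hd : 0 < d := lt_of_lt_of_le hδ hδd
  unfold Bhat
  by_cases h : δ < z
  · rw [if_pos h]
    have hz : 0 < z := hδ.trans h
    have hl : Real.log (z / d) ≤ z / d - 1 := Real.log_le_sub_one_of_pos (by positivity)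
    rw [Real.log_div (ne_of_gt hz) (ne_of_gt hd)] at hl
    have : (d - z) / d = 1 - z / d := by field_simp
    linarith
  · rw [if_neg h]
    push_neg at h
    have hl : Real.log (δ / d) ≤ δ / d - 1 := Real.log_le_sub_one_of_pos (by positivity)
    rw [Real.log_div (ne_of_gt hδ) (ne_of_gt hd)] at hl
    have key : (1 / 2) * (((z - 2 * δ) / δ) ^ 2 - 1) + 1 - δ / d - (d - z) / d
        = (z - δ) ^ 2 / (2 * δ ^ 2) + (δ - z) * (1 / δ - 1 / d) := by
      field_simp; ring
    have h1 : 0 ≤ (z - δ) ^ 2 / (2 * δ ^ 2) := by positivity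
    have h2 : 0 ≤ (δ - z) * (1 / δ - 1 / d) := by
      apply mul_nonneg (by linarith)
      have := one_div_le_one_div_of_le hδ hδd
      linarith
    linarith

lemma key_lt (δ d z : ℝ) (hδ : 0 < δ) (hδd : δ ≤ d) (hz : z ≠ d) :
    (d - z) / d < Bhat δ z + Real.log d := by
  have hd : 0 < d := lt_of_lt_of_le hδ hδd
  unfold Bhat
  by_cases h : δ < z
  · rw [if_pos h]
    have hz' : 0 < z := hδ.trans h
    have hne : z / d ≠ 1 := by
      intro hc; apply hz; field_simp at hc; linarith
    have hl : Real.log (z / d) < z / d - 1 := Real.log_lt_sub_one_of_pos (by positivity) hne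
    rw [Real.log_div (ne_of_gt hz') (ne_of_gt hd)] at hl
    have : (d - z) / d = 1 - z / d := by field_simp
    linarith
  · rw [if_neg h]
    push_neg at h
    have key : (1 / 2) * (((z - 2 * δ) / δ) ^ 2 - 1) + 1 - δ / d - (d - z) / d
        = (z - δ) ^ 2 / (2 * δ ^ 2) + (δ - z) * (1 / δ - 1 / d) := by
      field_simp; ring
    have h2 : 0 ≤ (δ - z) * (1 / δ - 1 / d) := by
      apply mul_nonneg (by linarith)
      have := one_div_le_one_div_of_le hδ hδd
      linarith
    rcases lt_or_eq_of_le h with hlt | heq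
    · have hl : Real.log (δ / d) ≤ δ / d - 1 := Real.log_le_sub_one_of_pos (by positivity)
      rw [Real.log_div (ne_of_gt hδ) (ne_of_gt hd)] at hl
      have h1 : 0 < (z - δ) ^ 2 / (2 * δ ^ 2) := by
        have : (z - δ) ^ 2 > 0 := by nlinarith
        positivity
      linarith
    · subst heq
      have hne : z / d ≠ 1 := by
        intro hc; apply hz; field_simp at hc; linarith
      have hl : Real.log (z / d) < z / d - 1 := Real.log_lt_sub_one_of_pos (by positivity) hne
      rw [Real.log_div (ne_of_gt hδ) (ne_of_gt hd)] at hl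
      have h1 : 0 ≤ (z - z) ^ 2 / (2 * z ^ 2) := by positivity
      linarith


/-- If the polytope `P = {ξ : Cξ ≤ d}` is compact (equivalently `Cξ ≤ 0 → ξ = 0`),
`0 < δ ≤ min_i dⁱ`, and the nonnegative weights satisfy the recentering condition
`Cᵀ diag(1/d)(𝟙+w) = 0`, then the recentered relaxed barrier function is positive
definite: it vanishes at the origin together with its gradient, and is strictly
positive away from the origin. -/
theorem recentered_relaxed_barrier_positive_definite
    {q r : ℕ} (δ : ℝ) (C : Matrix (Fin q) (Fin r) ℝ) (d w : Fin q → ℝ)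
    (hδ : 0 < δ) (hδd : ∀ i, δ ≤ d i)
    (hd : ∀ i, 0 < d i) (hw : ∀ i, 0 ≤ w i)
    (hcompact : ∀ ξ : Fin r → ℝ, C.mulVec ξ ≤ 0 → ξ = 0)
    (hrecenter : Cᵀ.mulVec (fun i => (1 / d i) * (1 + w i)) = 0) :
    BhatP δ C d w 0 = 0 ∧
    fderiv ℝ (BhatP δ C d w) 0 = 0 ∧
    (∀ ξ : Fin r → ℝ, ξ ≠ 0 → 0 < BhatP δ C d w ξ) := by
  -- the linear lower-bound sum vanishes thanks to the recentering condition
  have hsum_zero : ∀ ξ : Fin r → ℝ,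
      ∑ i, (1 + w i) * (C.mulVec ξ i / d i) = 0 := by
    intro ξ
    have e : ∑ i, (1 + w i) * (C.mulVec ξ i / d i)
        = ∑ j, Cᵀ.mulVec (fun i => (1 / d i) * (1 + w i)) j * ξ j := by
      simp only [Matrix.mulVec, dotProduct, Matrix.transpose_apply,
        Finset.sum_mul, Finset.mul_sum, Finset.sum_div]
      rw [Finset.sum_comm]
      refine Finset.sum_congr rfl fun j _ => Finset.sum_congr rfl fun i _ => by ring
    rw [e, hrecenter]
    simp
  -- value at origin
  have h0 : BhatP δ C d w 0 = 0 := by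
    unfold BhatP
    apply Finset.sum_eq_zero
    intro i _
    simp [Matrix.mulVec_zero, Bhat_at_d δ (d i) hδ (hδd i)]
  -- global lower bound
  have hge : ∀ ξ : Fin r → ℝ, 0 ≤ BhatP δ C d w ξ := by
    intro ξ
    rw [← hsum_zero ξ]
    unfold BhatP
    apply Finset.sum_le_sum
    intro i _
    apply mul_le_mul_of_nonneg_left _ (by have := hw i; linarith)
    have := key_le δ (d i) (-(C.mulVec ξ i) + d i) hδ (hδd i)
    have e : (d i - (-(C.mulVec ξ i) + d i)) / d i = C.mulVec ξ i / d i := by ring_nf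
    linarith [e ▸ this]
  -- strict positivity
  have hpos : ∀ ξ : Fin r → ℝ, ξ ≠ 0 → 0 < BhatP δ C d w ξ := by
    intro ξ hξ
    have hCξ : C.mulVec ξ ≠ 0 := by
      intro h
      exact hξ (hcompact ξ (le_of_eq h))
    obtain ⟨i0, hi0⟩ := Function.ne_iff.mp hCξ
    rw [← hsum_zero ξ]
    unfold BhatP
    apply Finset.sum_lt_sum
    · intro i _
      apply mul_le_mul_of_nonneg_left _ (by have := hw i; linarith)
      have := key_le δ (d i) (-(C.mulVec ξ i) + d i) hδ (hδd i)
      have e : (d i - (-(C.mulVec ξ i) + d i)) / d i = C.mulVec ξ i / d i := by ring_nf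
      linarith [e ▸ this]
    · refine ⟨i0, Finset.mem_univ _, ?_⟩
      apply mul_lt_mul_of_pos_left _ (by have := hw i0; linarith)
      have hne : -(C.mulVec ξ i0) + d i0 ≠ d i0 := by
        intro h
        apply hi0
        have : -(C.mulVec ξ i0) = 0 := by linarith [h]
        simpa using this
      have := key_lt δ (d i0) (-(C.mulVec ξ i0) + d i0) hδ (hδd i0) hne
      have e : (d i0 - (-(C.mulVec ξ i0) + d i0)) / d i0 = C.mulVec ξ i0 / d i0 := by ring_nf
      linarith [e ▸ this]
  -- gradient vanishes: 0 is a global minimum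
  have hmin : IsLocalMin (BhatP δ C d w) 0 :=
    Filter.Eventually.of_forall fun x => h0 ▸ hge x
  exact ⟨h0, hmin.fderiv_eq_zero, hpos⟩
end

section
/- (Lemma 1, part i) Suppose the quadratic part q(U,x) := (1/2)UᵀHU + xᵀFU + xᵀYx is positive semidefinite in (U,x), ε > 0, and the combined constraint polytope Z = {(U,x) ∈ ℝ^{Nm}×ℝⁿ : GU − Ex ≤ d} is compact, with 0 < δ ≤ min_i dⁱ and the weight vector w ∈ ℝ^q having nonnegative entries and satisfying the recentering condition making B̂_xu positive definite (the gradient of B̂_xu vanishing at the origin). Then there exist class-K∞ functions α and ᾱ such that α(‖(U,x)‖) ≤ Ĵ_N(U,x) ≤ ᾱ(‖(U,x)‖) for all (U,x) ∈ ℝ^{Nm} × ℝⁿ. -/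
open Matrix

/-- Recentered relaxed logarithmic barrier for the combined constraints `GU ≤ d + Ex`. -/
noncomputable def Bxu {nm n q : ℕ} (δ : ℝ) (G : Matrix (Fin q) (Fin nm) ℝ)
    (E : Matrix (Fin q) (Fin n) ℝ) (d w : Fin q → ℝ)
    (U : Fin nm → ℝ) (x : Fin n → ℝ) : ℝ :=
  ∑ i, (1 + w i) * (Bhat δ (-(G.mulVec U i) + E.mulVec x i + d i) + Real.log (d i))

/-- The relaxed barrier function based MPC cost in condensed form:
`Ĵ_N(U,x) = (1/2)UᵀHU + xᵀFU + xᵀYx + ε B̂_xu(U,x)`. -/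
noncomputable def Jcost {nm n q : ℕ} (δ ε : ℝ) (H : Matrix (Fin nm) (Fin nm) ℝ)
    (F : Matrix (Fin n) (Fin nm) ℝ) (Y : Matrix (Fin n) (Fin n) ℝ)
    (G : Matrix (Fin q) (Fin nm) ℝ) (E : Matrix (Fin q) (Fin n) ℝ) (d w : Fin q → ℝ)
    (U : Fin nm → ℝ) (x : Fin n → ℝ) : ℝ :=
  (1 / 2) * (U ⬝ᵥ H.mulVec U) + x ⬝ᵥ F.mulVec U + x ⬝ᵥ Y.mulVec x +
    ε * Bxu δ G E d w U x

/-- Euclidean norm of a pair of vectors `(U, x)`. -/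
noncomputable def pairNorm {nm n : ℕ} (U : Fin nm → ℝ) (x : Fin n → ℝ) : ℝ :=
  Real.sqrt ((∑ i, (U i) ^ 2) + ∑ j, (x j) ^ 2)

/-- A class-`K∞` function: continuous, strictly increasing, vanishing at `0`, unbounded. -/
def IsKInfty (α : ℝ → ℝ) : Prop :=
  ContinuousOn α (Set.Ici 0) ∧ StrictMonoOn α (Set.Ici 0) ∧ α 0 = 0 ∧
    Filter.Tendsto α Filter.atTop Filter.atTop


set_option maxHeartbeats 1000000

section Aux

open Finset

/-! ### 1-D lemmas about the relaxed barrier -/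

noncomputable def Dd (δ z : ℝ) : ℝ :=
  if δ < z then -z⁻¹ else (z - 2 * δ) / δ ^ 2

lemma bhat_of_le {δ z : ℝ} (h : z ≤ δ) :
    Bhat δ z = (1 / 2) * (((z - 2 * δ) / δ) ^ 2 - 1) - Real.log δ := by
  simp [Bhat, not_lt.2 h]

lemma bhat_at {δ d : ℝ} (hδ : 0 < δ) (hd : δ ≤ d) : Bhat δ d = -Real.log d := by
  rcases lt_or_eq_of_le hd with h | h
  · simp [Bhat, h]
  · rw [← h, bhat_of_le le_rfl]
    have h1 : (δ - 2 * δ) / δ = -1 := by field_simp; ring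
    rw [h1]; norm_num

lemma dd_at {δ : ℝ} (hδ : 0 < δ) : Dd δ δ = -δ⁻¹ := by
  rw [Dd, if_neg (lt_irrefl δ)]
  field_simp
  ring

lemma beta_hasDerivAt (δ : ℝ) (hδ : 0 < δ) (z : ℝ) :
    HasDerivAt (fun y => (1 / 2) * (((y - 2 * δ) / δ) ^ 2 - 1) - Real.log δ)
      ((z - 2 * δ) / δ ^ 2) z := by
  have h1 : HasDerivAt (fun y : ℝ => (y - 2 * δ) / δ) (1 / δ) z := by
    simpa using ((hasDerivAt_id z).sub_const (2 * δ)).div_const δ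
  have h3 := (((h1.pow 2).sub_const 1).const_mul ((1:ℝ)/2)).sub_const (Real.log δ)
  have : ((1:ℝ)/2) * ((2:ℕ) * ((z - 2*δ)/δ) ^ (2-1) * (1/δ)) = (z - 2*δ)/δ^2 := by
    rw [pow_one]
    have hδ0 : δ ≠ 0 := ne_of_gt hδ
    push_cast
    field_simp
  rw [← this]
  exact h3

lemma bhat_hasDerivAt {δ : ℝ} (hδ : 0 < δ) (z : ℝ) :
    HasDerivAt (Bhat δ) (Dd δ z) z := by
  rcases lt_trichotomy z δ with h | h | h
  · have hev : Bhat δ =ᶠ[nhds z]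
        fun y => (1 / 2) * (((y - 2 * δ) / δ) ^ 2 - 1) - Real.log δ := by
      filter_upwards [Iio_mem_nhds h] with y hy
      exact bhat_of_le (le_of_lt hy)
    rw [show Dd δ z = (z - 2 * δ) / δ ^ 2 from if_neg (not_lt.2 h.le)]
    exact (beta_hasDerivAt δ hδ z).congr_of_eventuallyEq hev
  · rw [h, dd_at hδ]
    have hleft : HasDerivWithinAt (Bhat δ) (-δ⁻¹) (Set.Iic δ) δ := by
      have hb := (beta_hasDerivAt δ hδ δ).hasDerivWithinAt (s := Set.Iic δ)
      have heq : ∀ y ∈ Set.Iic δ, Bhat δ y =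
          (1 / 2) * (((y - 2 * δ) / δ) ^ 2 - 1) - Real.log δ := fun y hy => bhat_of_le hy
      have h2 := hb.congr heq (heq δ (Set.mem_Iic.mpr le_rfl))
      refine h2.congr_deriv ?_
      field_simp
      ring
    have hright : HasDerivWithinAt (Bhat δ) (-δ⁻¹) (Set.Ici δ) δ := by
      have hlog : HasDerivAt (fun y : ℝ => -Real.log y) (-δ⁻¹) δ :=
        (Real.hasDerivAt_log (ne_of_gt hδ)).neg
      exact hlog.hasDerivWithinAt.congr (fun y hy => bhat_at hδ hy) (bhat_at hδ le_rfl)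
    have hu := hleft.union hright
    rw [Set.Iic_union_Ici, hasDerivWithinAt_univ] at hu
    exact hu
  · have hev : Bhat δ =ᶠ[nhds z] fun y => -Real.log y := by
      filter_upwards [Ioi_mem_nhds h] with y hy
      simp [Bhat, Set.mem_Ioi.mp hy]
    rw [show Dd δ z = -z⁻¹ from if_pos h]
    exact ((Real.hasDerivAt_log (ne_of_gt (hδ.trans h))).neg).congr_of_eventuallyEq hev

lemma dd_mono {δ : ℝ} (hδ : 0 < δ) : Monotone (Dd δ) := by
  intro z₁ z₂ h12
  by_cases h1 : δ < z₁
  · rw [Dd, if_pos h1, Dd, if_pos (lt_of_lt_of_le h1 h12)]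
    have h10 : 0 < z₁ := hδ.trans h1
    simp only [neg_le_neg_iff]
    exact inv_anti₀ h10 h12
  · rw [Dd, if_neg h1]
    push_neg at h1
    by_cases h2 : δ < z₂
    · rw [Dd, if_pos h2]
      have key : (z₁ - 2 * δ) / δ ^ 2 ≤ -δ⁻¹ := by
        rw [div_le_iff₀ (by positivity)]
        have hrw : -δ⁻¹ * δ ^ 2 = -δ := by
          rw [sq]; field_simp
        rw [hrw]; linarith
      refine key.trans ?_
      rw [neg_le_neg_iff]
      exact inv_anti₀ hδ h2.le
    · rw [Dd, if_neg h2]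
      apply div_le_div_of_nonneg_right (by linarith) (by positivity)

lemma dd_strong {δ M y₁ y₂ : ℝ} (hδ : 0 < δ) (hM : δ ≤ M) (h12 : y₁ ≤ y₂) (h2M : y₂ ≤ M) :
    (y₂ - y₁) / M ^ 2 ≤ Dd δ y₂ - Dd δ y₁ := by
  have hM0 : 0 < M := lt_of_lt_of_le hδ hM
  have hnum : 0 ≤ y₂ - y₁ := by linarith
  by_cases h2 : δ < y₂
  · have h20 : 0 < y₂ := hδ.trans h2
    by_cases h1 : δ < y₁
    · have h10 : 0 < y₁ := hδ.trans h1
      rw [Dd, if_pos h2, Dd, if_pos h1]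
      have hrw : -y₂⁻¹ - -y₁⁻¹ = (y₂ - y₁) / (y₁ * y₂) := by field_simp; ring
      rw [hrw]
      gcongr <;> first | positivity | nlinarith
    · push_neg at h1
      rw [Dd, if_pos h2, Dd, if_neg (not_lt.2 h1)]
      have key1 : (y₂ - δ) / M ^ 2 ≤ -y₂⁻¹ - -δ⁻¹ := by
        have hrw : -y₂⁻¹ - -δ⁻¹ = (y₂ - δ) / (δ * y₂) := by field_simp; ring
        rw [hrw]
        gcongr <;> first | positivity | nlinarith | linarith
      have key2 : (δ - y₁) / M ^ 2 ≤ -δ⁻¹ - (y₁ - 2 * δ) / δ ^ 2 := by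
        have hrw : -δ⁻¹ - (y₁ - 2 * δ) / δ ^ 2 = (δ - y₁) / δ ^ 2 := by field_simp; ring
        rw [hrw]
        gcongr <;> first | positivity | nlinarith | linarith
      have hδinv : -δ⁻¹ - -δ⁻¹ = 0 := by ring
      have hsplit : (y₂ - y₁) / M ^ 2 = (y₂ - δ) / M ^ 2 + (δ - y₁) / M ^ 2 := by ring
      rw [hsplit]
      linarith
  · push_neg at h2
    rw [Dd, if_neg (not_lt.2 h2), Dd, if_neg (not_lt.2 (h12.trans h2))]
    have hrw : (y₂ - 2 * δ) / δ ^ 2 - (y₁ - 2 * δ) / δ ^ 2 = (y₂ - y₁) / δ ^ 2 := by ring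
    rw [hrw]
    gcongr <;> first | positivity | nlinarith

lemma affine_comp_hasDerivAt {δ c a : ℝ} (hδ : 0 < δ) (t : ℝ) :
    HasDerivAt (fun s => Bhat δ (c + s * a)) (a * Dd δ (c + t * a)) t := by
  have hin : HasDerivAt (fun s : ℝ => c + s * a) a t := by
    simpa using ((hasDerivAt_id t).mul_const a).const_add c
  have := (bhat_hasDerivAt hδ (c + t * a)).comp t hin
  simpa [mul_comm, Function.comp_def] using this

/-- convexity of `t ↦ Bhat δ (c + t * a)` on all of ℝ -/
lemma bhat_affine_convexOn {δ c a : ℝ} (hδ : 0 < δ) :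
    ConvexOn ℝ Set.univ (fun s => Bhat δ (c + s * a)) := by
  have hder : ∀ t, deriv (fun s => Bhat δ (c + s * a)) t = a * Dd δ (c + t * a) :=
    fun t => (affine_comp_hasDerivAt hδ t).deriv
  apply MonotoneOn.convexOn_of_deriv convex_univ
  · exact (Continuous.continuousOn (by
      have : ∀ t, ContinuousAt (fun s => Bhat δ (c + s * a)) t :=
        fun t => (affine_comp_hasDerivAt hδ t).continuousAt
      exact continuous_iff_continuousAt.mpr this))
  · intro t _
    exact (affine_comp_hasDerivAt hδ t).differentiableAt.differentiableWithinAt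
  · intro t₁ _ t₂ _ h12
    rw [hder, hder]
    rcases le_or_gt 0 a with ha | ha
    · rcases eq_or_lt_of_le ha with rfl | ha'
      · simp
      · have := dd_mono hδ (show c + t₁ * a ≤ c + t₂ * a by nlinarith)
        nlinarith
    · have := dd_mono hδ (show c + t₂ * a ≤ c + t₁ * a by nlinarith)
      nlinarith

/-- strong convexity on [0,1]: `t ↦ Bhat δ (c + t*a) - κ a² t²/2` is convex when
`δ ≤ c`, `|a| ≤ R`, `M = max δ (c + R)`, `κ = 1/M²`. -/
lemma bhat_strong_convexOn {δ c a R : ℝ} (hδ : 0 < δ) (hc : δ ≤ c) (haR : |a| ≤ R) :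
    ConvexOn ℝ (Set.Icc (0:ℝ) 1)
      (fun t => Bhat δ (c + t * a) - (a ^ 2 / (max δ (c + R)) ^ 2) * t ^ 2 / 2) := by
  set M := max δ (c + R) with hMdef
  have hM : δ ≤ M := le_max_left _ _
  have hM0 : 0 < M := lt_of_lt_of_le hδ hM
  have hhd : ∀ t, HasDerivAt
      (fun s => Bhat δ (c + s * a) - (a ^ 2 / M ^ 2) * s ^ 2 / 2)
      (a * Dd δ (c + t * a) - (a ^ 2 / M ^ 2) * t) t := by
    intro t
    have h2 : HasDerivAt (fun s : ℝ => (a ^ 2 / M ^ 2) * s ^ 2 / 2)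
        ((a ^ 2 / M ^ 2) * t) t := by
      have := (((hasDerivAt_id t).pow 2).const_mul (a ^ 2 / M ^ 2)).div_const 2
      refine this.congr_deriv ?_
      rw [pow_one]
      push_cast
      simp only [id_eq, mul_one]
      ring
    exact (affine_comp_hasDerivAt hδ t).sub h2
  apply MonotoneOn.convexOn_of_deriv (convex_Icc _ _)
  · exact Continuous.continuousOn (continuous_iff_continuousAt.mpr
      (fun t => (hhd t).continuousAt))
  · exact fun t _ => (hhd t).differentiableAt.differentiableWithinAt
  · intro t₁ ht₁ t₂ ht₂ h12
    rw [(hhd t₁).deriv, (hhd t₂).deriv]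
    rw [interior_Icc] at ht₁ ht₂
    rcases lt_trichotomy a 0 with ha | rfl | ha
    · -- a < 0 : y decreases with t
      have habs : -a ≤ R := by rw [abs_of_neg ha] at haR; linarith
      have hy12 : c + t₂ * a ≤ c + t₁ * a := by nlinarith [ht₁.1, ht₂.1]
      have hy1M : c + t₁ * a ≤ M := by nlinarith [ht₁.1, le_max_right δ (c + R), hδ.trans_le hc]
      have key := dd_strong hδ hM hy12 hy1M
      have h' := mul_le_mul_of_nonpos_left key (le_of_lt ha)
      have heq : a * ((c + t₁ * a - (c + t₂ * a)) / M ^ 2) =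
          a ^ 2 / M ^ 2 * t₁ - a ^ 2 / M ^ 2 * t₂ := by ring
      rw [heq] at h'
      linarith
    · simp
    · have habs : a ≤ R := by rw [abs_of_pos ha] at haR; linarith
      have hy12 : c + t₁ * a ≤ c + t₂ * a := by nlinarith
      have hy2M : c + t₂ * a ≤ M := by
        have : c + t₂ * a ≤ c + R := by nlinarith [ht₂.2]
        exact this.trans (le_max_right _ _)
      have key := dd_strong hδ hM hy12 hy2M
      have h' := mul_le_mul_of_nonneg_left key (le_of_lt ha)
      have heq : a * ((c + t₂ * a - (c + t₁ * a)) / M ^ 2) =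
          a ^ 2 / M ^ 2 * t₂ - a ^ 2 / M ^ 2 * t₁ := by ring
      rw [heq] at h'
      linarith

/-- A function convex on `[0,1]`, vanishing at `0`, with two-sided derivative `0` at `0`,
is nonnegative at `1`. -/
lemma nonneg_of_convexOn_derivZero {h : ℝ → ℝ}
    (hc : ConvexOn ℝ (Set.Icc (0:ℝ) 1) h) (h0 : h 0 = 0) (hd : HasDerivAt h 0 0) :
    0 ≤ h 1 := by
  by_contra hneg
  push_neg at hneg
  have hslope : Filter.Tendsto (slope h 0) (nhdsWithin 0 {(0:ℝ)}ᶜ) (nhds 0) :=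
    hasDerivAt_iff_tendsto_slope.mp hd
  have hmono : nhdsWithin (0:ℝ) (Set.Ioi 0) ≤ nhdsWithin 0 {(0:ℝ)}ᶜ :=
    nhdsWithin_mono 0 (fun x hx => ne_of_gt hx)
  have hslope' : Filter.Tendsto (slope h 0) (nhdsWithin 0 (Set.Ioi 0)) (nhds 0) :=
    hslope.mono_left hmono
  have hev : ∀ᶠ t in nhdsWithin (0:ℝ) (Set.Ioi 0), slope h 0 t ≤ h 1 := by
    filter_upwards [Ioc_mem_nhdsGT_of_mem (Set.mem_Ico.mpr ⟨le_refl (0:ℝ), one_pos⟩)]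
      with t ht
    obtain ⟨ht0, ht1⟩ := ht
    have hcomb := hc.2 (Set.mem_Icc.mpr ⟨le_refl (0:ℝ), zero_le_one⟩)
      (Set.mem_Icc.mpr ⟨zero_le_one, le_refl (1:ℝ)⟩)
      (by linarith : (0:ℝ) ≤ 1 - t) (le_of_lt ht0) (by ring)
    simp only [smul_eq_mul, mul_zero, zero_add, mul_one] at hcomb
    rw [h0, mul_zero, zero_add] at hcomb
    have hslope_eq : slope h 0 t = h t / t := by
      rw [slope_def_field, h0, sub_zero, sub_zero]
    rw [hslope_eq, div_le_iff₀ ht0]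
    linarith
  have hle := le_of_tendsto hslope' hev
  linarith

lemma bhat_upper {δ d : ℝ} (hδ : 0 < δ) (hd : δ ≤ d) (s : ℝ) :
    Bhat δ (d + s) + Real.log d ≤ (2 / δ + 1 / (2 * δ ^ 2)) * (|s| + s ^ 2) := by
  have hd0 : 0 < d := hδ.trans_le hd
  have habs : 0 ≤ |s| := abs_nonneg s
  have hK : 0 ≤ 2 / δ + 1 / (2 * δ ^ 2) := by positivity
  by_cases hb : δ < d + s
  · rw [Bhat, if_pos hb]
    rcases le_or_gt 0 s with hs | hs
    · have hll : Real.log d ≤ Real.log (d + s) := Real.log_le_log hd0 (by linarith)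
      nlinarith [sq_nonneg s]
    · have hds : 0 < d + s := hδ.trans hb
      have hlog : Real.log (d / (d + s)) ≤ d / (d + s) - 1 :=
        Real.log_le_sub_one_of_pos (by positivity)
      rw [Real.log_div (ne_of_gt hd0) (ne_of_gt hds)] at hlog
      have h2 : d / (d + s) - 1 = (-s) / (d + s) := by field_simp; ring
      have h3 : (-s) / (d + s) ≤ (-s) / δ := by
        apply div_le_div_of_nonneg_left (by linarith) hδ (by linarith)
      have h4 : (-s) / δ = (1 / δ) * (-s) := by ring
      have h5 : (1 / δ) * (-s) ≤ (2 / δ) * (-s) := by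
        apply mul_le_mul_of_nonneg_right _ (by linarith)
        apply div_le_div_of_nonneg_right (by norm_num) hδ.le
      have h6 : (2 / δ) * (-s) ≤ (2 / δ + 1 / (2 * δ ^ 2)) * (|s| + s ^ 2) := by
        rw [abs_of_neg hs]
        have : (0:ℝ) ≤ (2 / δ) * s ^ 2 + (1 / (2 * δ ^ 2)) * (-s + s ^ 2) := by
          have h7 : (0:ℝ) ≤ -s + s^2 := by nlinarith
          positivity
        nlinarith
      linarith
  · push_neg at hb
    rw [bhat_of_le hb]
    have hs : s ≤ δ - d := by linarith
    have hs0 : s ≤ 0 := by linarith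
    have hδ2 : (0:ℝ) < 2 * δ ^ 2 := by positivity
    have hlog2 : Real.log d - Real.log δ ≤ (d - δ) / δ := by
      have h1 := Real.log_le_sub_one_of_pos (show (0:ℝ) < d / δ by positivity)
      rw [Real.log_div (ne_of_gt hd0) (ne_of_gt hδ)] at h1
      have h2 : d / δ - 1 = (d - δ) / δ := by field_simp
      linarith [h2 ▸ h1]
    have key : (d + s - 2*δ)^2 - δ^2 + 2*δ*(d - δ) ≤ (4*δ + 1) * (-s + s^2) := by
      nlinarith [mul_nonneg (show (0:ℝ) ≤ d - δ by linarith)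
          (show (0:ℝ) ≤ -s - (d - δ) by linarith),
        mul_nonneg (show (0:ℝ) ≤ d - δ by linarith) (show (0:ℝ) ≤ -s by linarith),
        mul_nonneg hδ.le (show (0:ℝ) ≤ -s by linarith),
        mul_nonneg (mul_nonneg hδ.le hδ.le) (show (0:ℝ) ≤ -s by linarith),
        mul_nonneg hδ.le (sq_nonneg s)]
    have hdiv : ((d + s - 2*δ)^2 - δ^2 + 2*δ*(d - δ)) / (2*δ^2) ≤
        ((4*δ + 1) * (-s + s^2)) / (2*δ^2) :=
      div_le_div_of_nonneg_right key hδ2.le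
    have e1 : (1/2 : ℝ) * (((d + s - 2*δ)/δ)^2 - 1) =
        ((d + s - 2*δ)^2 - δ^2) / (2*δ^2) := by
      field_simp
      try ring
    have e2 : (2 / δ + 1 / (2 * δ ^ 2)) * (|s| + s ^ 2) =
        ((4*δ + 1) * (-s + s^2)) / (2*δ^2) := by
      rw [abs_of_nonpos hs0]
      field_simp
      ring
    have e3 : (d - δ) / δ = (2*δ*(d - δ)) / (2*δ^2) := by
      rw [sq]
      field_simp
    rw [e1, e2]
    have esplit : ((d + s - 2*δ)^2 - δ^2 + 2*δ*(d - δ)) / (2*δ^2) =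
        ((d + s - 2*δ)^2 - δ^2) / (2*δ^2) + (2*δ*(d - δ)) / (2*δ^2) := by ring
    rw [esplit] at hdiv
    rw [← e3] at hdiv
    linarith


/-! ### sums of convex functions -/

lemma convexOn_finset_sum {ι : Type*} (t : Finset ι) {D : Set ℝ} (hD : Convex ℝ D)
    {f : ι → ℝ → ℝ} (hf : ∀ i ∈ t, ConvexOn ℝ D (f i)) :
    ConvexOn ℝ D (fun x => ∑ i ∈ t, f i x) := by
  classical
  induction t using Finset.cons_induction with
  | empty => simpa using convexOn_const 0 hD
  | cons a s ha ih =>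
    have h := (hf a (Finset.mem_cons_self a s)).add
      (ih (fun i hi => hf i (Finset.mem_cons_of_mem hi)))
    have heq : (fun x => ∑ i ∈ Finset.cons a s ha, f i x)
        = f a + fun x => ∑ i ∈ s, f i x := by
      funext x; rw [Finset.sum_cons]; rfl
    rw [heq]
    exact h

/-! ### pairNorm lemmas -/

lemma pairNorm_nonneg {nm n : ℕ} (U : Fin nm → ℝ) (x : Fin n → ℝ) :
    0 ≤ pairNorm U x := Real.sqrt_nonneg _

lemma pairNorm_sq {nm n : ℕ} (U : Fin nm → ℝ) (x : Fin n → ℝ) :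
    (pairNorm U x) ^ 2 = (∑ i, (U i) ^ 2) + ∑ j, (x j) ^ 2 :=
  Real.sq_sqrt (by positivity)

lemma abs_fst_le_pairNorm {nm n : ℕ} (U : Fin nm → ℝ) (x : Fin n → ℝ) (i : Fin nm) :
    |U i| ≤ pairNorm U x := by
  rw [pairNorm, ← Real.sqrt_sq_eq_abs]
  apply Real.sqrt_le_sqrt
  have h1 : U i ^ 2 ≤ ∑ i', (U i') ^ 2 :=
    Finset.single_le_sum (f := fun i' => (U i') ^ 2) (fun _ _ => sq_nonneg _)
      (Finset.mem_univ i)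
  have h2 : (0:ℝ) ≤ ∑ j, (x j) ^ 2 := by positivity
  linarith

lemma abs_snd_le_pairNorm {nm n : ℕ} (U : Fin nm → ℝ) (x : Fin n → ℝ) (j : Fin n) :
    |x j| ≤ pairNorm U x := by
  rw [pairNorm, ← Real.sqrt_sq_eq_abs]
  apply Real.sqrt_le_sqrt
  have h1 : x j ^ 2 ≤ ∑ j', (x j') ^ 2 :=
    Finset.single_le_sum (f := fun j' => (x j') ^ 2) (fun _ _ => sq_nonneg _)
      (Finset.mem_univ j)
  have h2 : (0:ℝ) ≤ ∑ i, (U i) ^ 2 := by positivity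
  linarith

lemma pairNorm_smul {nm n : ℕ} (c : ℝ) (U : Fin nm → ℝ) (x : Fin n → ℝ) :
    pairNorm (c • U) (c • x) = |c| * pairNorm U x := by
  rw [pairNorm, pairNorm]
  have h : (∑ i, ((c • U) i) ^ 2) + ∑ j, ((c • x) j) ^ 2
      = c ^ 2 * ((∑ i, (U i) ^ 2) + ∑ j, (x j) ^ 2) := by
    simp only [Pi.smul_apply, smul_eq_mul, mul_pow, ← Finset.mul_sum]
    ring
  rw [h, Real.sqrt_mul (sq_nonneg c), Real.sqrt_sq_eq_abs]

/-! ### quadratic-form bound -/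

lemma dot_mulVec_bound {p p' : ℕ} (A : Matrix (Fin p) (Fin p') ℝ)
    (u : Fin p → ℝ) (v : Fin p' → ℝ) {r : ℝ} (hr : 0 ≤ r)
    (hu : ∀ i, |u i| ≤ r) (hv : ∀ j, |v j| ≤ r) :
    u ⬝ᵥ A.mulVec v ≤ (∑ i, ∑ j, |A i j|) * r ^ 2 := by
  have h1 : u ⬝ᵥ A.mulVec v = ∑ i, ∑ j, u i * (A i j * v j) := by
    simp [dotProduct, Matrix.mulVec, Finset.mul_sum]
  rw [h1]
  have h2 : ∀ i : Fin p, ∀ j : Fin p', u i * (A i j * v j) ≤ |A i j| * r ^ 2 := by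
    intro i j
    have hle : u i * (A i j * v j) ≤ |u i| * (|A i j| * |v j|) := by
      calc u i * (A i j * v j) ≤ |u i * (A i j * v j)| := le_abs_self _
        _ = |u i| * (|A i j| * |v j|) := by rw [abs_mul, abs_mul]
    refine hle.trans ?_
    have := mul_le_mul (hu i)
      (mul_le_mul_of_nonneg_left (hv j) (abs_nonneg (A i j)))
      (by positivity) hr
    calc |u i| * (|A i j| * |v j|) ≤ r * (|A i j| * r) := this
      _ = |A i j| * r ^ 2 := by ring
  calc ∑ i, ∑ j, u i * (A i j * v j) ≤ ∑ i, ∑ j, |A i j| * r ^ 2 := by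
        apply Finset.sum_le_sum; intro i _
        exact Finset.sum_le_sum (fun j _ => h2 i j)
    _ = (∑ i, ∑ j, |A i j|) * r ^ 2 := by
        rw [Finset.sum_mul]
        exact Finset.sum_congr rfl (fun i _ => by rw [Finset.sum_mul])

/-! ### the linear map associated with the constraints -/

/-- `sfun G E U x i` is the (affine-part of the) `i`-th constraint value. -/
def sfun {nm n q : ℕ} (G : Matrix (Fin q) (Fin nm) ℝ) (E : Matrix (Fin q) (Fin n) ℝ)
    (U : Fin nm → ℝ) (x : Fin n → ℝ) : Fin q → ℝ :=
  fun i => E.mulVec x i - G.mulVec U i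

/-- row bound constant -/
def Rv {nm n q : ℕ} (G : Matrix (Fin q) (Fin nm) ℝ) (E : Matrix (Fin q) (Fin n) ℝ) :
    Fin q → ℝ := fun i => (∑ j, |G i j|) + (∑ j, |E i j|)

lemma Rv_nonneg {nm n q : ℕ} (G : Matrix (Fin q) (Fin nm) ℝ)
    (E : Matrix (Fin q) (Fin n) ℝ) (i : Fin q) : 0 ≤ Rv G E i := by
  unfold Rv; positivity

lemma sfun_smul {nm n q : ℕ} (G : Matrix (Fin q) (Fin nm) ℝ)
    (E : Matrix (Fin q) (Fin n) ℝ) (c : ℝ) (U : Fin nm → ℝ) (x : Fin n → ℝ) (i : Fin q) :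
    sfun G E (c • U) (c • x) i = c * sfun G E U x i := by
  unfold sfun
  rw [Matrix.mulVec_smul, Matrix.mulVec_smul]
  simp [smul_eq_mul]
  ring

lemma sfun_bound {nm n q : ℕ} (G : Matrix (Fin q) (Fin nm) ℝ)
    (E : Matrix (Fin q) (Fin n) ℝ) (U : Fin nm → ℝ) (x : Fin n → ℝ) (i : Fin q) :
    |sfun G E U x i| ≤ Rv G E i * pairNorm U x := by
  set r := pairNorm U x with hr
  have hr0 : 0 ≤ r := pairNorm_nonneg U x
  have h1 : |E.mulVec x i| ≤ (∑ j, |E i j|) * r := by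
    rw [Matrix.mulVec, dotProduct]
    calc |∑ j, E i j * x j| ≤ ∑ j, |E i j * x j| := Finset.abs_sum_le_sum_abs _ _
      _ ≤ ∑ j, |E i j| * r := by
          apply Finset.sum_le_sum; intro j _
          rw [abs_mul]
          exact mul_le_mul_of_nonneg_left (abs_snd_le_pairNorm U x j) (abs_nonneg _)
      _ = (∑ j, |E i j|) * r := by rw [Finset.sum_mul]
  have h2 : |G.mulVec U i| ≤ (∑ j, |G i j|) * r := by
    rw [Matrix.mulVec, dotProduct]
    calc |∑ j, G i j * U j| ≤ ∑ j, |G i j * U j| := Finset.abs_sum_le_sum_abs _ _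
      _ ≤ ∑ j, |G i j| * r := by
          apply Finset.sum_le_sum; intro j _
          rw [abs_mul]
          exact mul_le_mul_of_nonneg_left (abs_fst_le_pairNorm U x j) (abs_nonneg _)
      _ = (∑ j, |G i j|) * r := by rw [Finset.sum_mul]
  calc |sfun G E U x i| ≤ |E.mulVec x i| + |G.mulVec U i| := abs_sub _ _
    _ ≤ (∑ j, |E i j|) * r + (∑ j, |G i j|) * r := add_le_add h1 h2
    _ = Rv G E i * r := by rw [Rv]; ring

/-! ### formulas for Bxu along rays -/

lemma bxu_formula {nm n q : ℕ} (δ : ℝ) (G : Matrix (Fin q) (Fin nm) ℝ)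
    (E : Matrix (Fin q) (Fin n) ℝ) (d w : Fin q → ℝ)
    (U : Fin nm → ℝ) (x : Fin n → ℝ) (t : ℝ) :
    Bxu δ G E d w (t • U) (t • x)
      = ∑ i, (1 + w i) * (Bhat δ (d i + t * sfun G E U x i) + Real.log (d i)) := by
  unfold Bxu
  apply Finset.sum_congr rfl
  intro i _
  have harg : -(G.mulVec (t • U) i) + E.mulVec (t • x) i + d i
      = d i + t * sfun G E U x i := by
    rw [Matrix.mulVec_smul, Matrix.mulVec_smul]
    unfold sfun
    simp [smul_eq_mul]
    ring
  rw [harg]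

lemma bxu_formula_one {nm n q : ℕ} (δ : ℝ) (G : Matrix (Fin q) (Fin nm) ℝ)
    (E : Matrix (Fin q) (Fin n) ℝ) (d w : Fin q → ℝ)
    (U : Fin nm → ℝ) (x : Fin n → ℝ) :
    Bxu δ G E d w U x
      = ∑ i, (1 + w i) * (Bhat δ (d i + 1 * sfun G E U x i) + Real.log (d i)) := by
  have := bxu_formula δ G E d w U x 1
  rwa [one_smul, one_smul] at this

/-- The ray function is convex on all of ℝ. -/
lemma bxu_ray_convex {q : ℕ} (δ : ℝ) (hδ : 0 < δ) (d w : Fin q → ℝ)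
    (hw : ∀ i, 0 ≤ w i) (a : Fin q → ℝ) :
    ConvexOn ℝ Set.univ
      (fun t => ∑ i, (1 + w i) * (Bhat δ (d i + t * a i) + Real.log (d i))) := by
  apply convexOn_finset_sum _ convex_univ
  intro i _
  have hconv : ConvexOn ℝ Set.univ (fun t => Bhat δ (d i + t * a i) + Real.log (d i)) :=
    (bhat_affine_convexOn hδ).add (convexOn_const _ convex_univ)
  have h1w : (0:ℝ) ≤ 1 + w i := by linarith [hw i]
  simpa [smul_eq_mul] using hconv.smul h1w


lemma quadratic_hasDerivAt (κ t : ℝ) : HasDerivAt (fun s : ℝ => κ * s ^ 2 / 2) (κ * t) t := by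
  have h := (((hasDerivAt_id t).pow 2).const_mul κ).div_const 2
  refine h.congr_deriv ?_
  rw [pow_one]
  push_cast
  simp only [id_eq, mul_one]
  ring

/-- Quadratic lower bound for `Bxu` on the unit ball, given the recentering condition. -/
lemma bxu_ball {nm n q : ℕ} {δ : ℝ} (hδ : 0 < δ) (G : Matrix (Fin q) (Fin nm) ℝ)
    (E : Matrix (Fin q) (Fin n) ℝ) (d w : Fin q → ℝ)
    (hδd : ∀ i, δ ≤ d i) (hw : ∀ i, 0 ≤ w i)
    (hDv : ∀ (U : Fin nm → ℝ) (x : Fin n → ℝ),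
      ∑ i, (1 + w i) * Dd δ (d i) * sfun G E U x i = 0)
    (U : Fin nm → ℝ) (x : Fin n → ℝ) (hUx : pairNorm U x ≤ 1) :
    (∑ i, (sfun G E U x i) ^ 2 / (max δ (d i + Rv G E i)) ^ 2) / 2
      ≤ Bxu δ G E d w U x := by
  classical
  set a : Fin q → ℝ := sfun G E U x with ha_def
  set κ : Fin q → ℝ := fun i => (a i) ^ 2 / (max δ (d i + Rv G E i)) ^ 2 with hκ_def
  have ha : ∀ i, |a i| ≤ Rv G E i := fun i =>
    (sfun_bound G E U x i).trans (mul_le_of_le_one_right (Rv_nonneg G E i) hUx)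
  have h1w : ∀ i, (0:ℝ) ≤ 1 + w i := fun i => by linarith [hw i]
  set hsum : ℝ → ℝ := fun t => ∑ i,
      (1 + w i) * ((Bhat δ (d i + t * a i) - κ i * t ^ 2 / 2) + Real.log (d i))
    with hsum_def
  have hconv : ConvexOn ℝ (Set.Icc (0:ℝ) 1) hsum := by
    apply convexOn_finset_sum _ (convex_Icc 0 1)
    intro i _
    have hstrong := bhat_strong_convexOn (c := d i) (a := a i) (R := Rv G E i)
      hδ (hδd i) (ha i)
    have hconv1 : ConvexOn ℝ (Set.Icc (0:ℝ) 1)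
        (fun t => (Bhat δ (d i + t * a i) - κ i * t ^ 2 / 2) + Real.log (d i)) :=
      hstrong.add (convexOn_const _ (convex_Icc 0 1))
    simpa [smul_eq_mul] using hconv1.smul (h1w i)
  have h0 : hsum 0 = 0 := by
    apply Finset.sum_eq_zero
    intro i _
    have harg : d i + 0 * a i = d i := by ring
    rw [harg, bhat_at hδ (hδd i)]
    ring
  have hderiv : HasDerivAt hsum 0 0 := by
    have hterm : ∀ i ∈ Finset.univ, HasDerivAt
        (fun t => (1 + w i) * ((Bhat δ (d i + t * a i) - κ i * t ^ 2 / 2) + Real.log (d i)))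
        ((1 + w i) * (a i * Dd δ (d i + 0 * a i) - κ i * 0)) 0 := by
      intro i _
      exact (((affine_comp_hasDerivAt hδ 0).sub (quadratic_hasDerivAt (κ i) 0)).add_const
        (Real.log (d i))).const_mul (1 + w i)
    have hs := HasDerivAt.fun_sum hterm
    have heq : ∑ i, (1 + w i) * (a i * Dd δ (d i + 0 * a i) - κ i * 0) = 0 := by
      have h1 : ∀ i, (1 + w i) * (a i * Dd δ (d i + 0 * a i) - κ i * 0)
          = (1 + w i) * Dd δ (d i) * a i := by
        intro i
        have : d i + 0 * a i = d i := by ring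
        rw [this]; ring
      rw [Finset.sum_congr rfl (fun i _ => h1 i)]
      exact hDv U x
    rw [heq] at hs
    exact hs
  have hfinal := nonneg_of_convexOn_derivZero hconv h0 hderiv
  have hsplit : hsum 1 = Bxu δ G E d w U x - ∑ i, (1 + w i) * (κ i / 2) := by
    rw [bxu_formula_one δ G E d w U x, hsum_def, ← Finset.sum_sub_distrib]
    apply Finset.sum_congr rfl
    intro i _
    ring
  rw [hsplit] at hfinal
  have hmono : (∑ i, κ i) / 2 ≤ ∑ i, (1 + w i) * (κ i / 2) := by
    rw [Finset.sum_div]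
    apply Finset.sum_le_sum
    intro i _
    have hκ0 : 0 ≤ κ i / 2 := by
      have : (0:ℝ) ≤ κ i := by
        rw [hκ_def]
        positivity
      linarith
    nlinarith [hw i]
  have : (∑ i, κ i) / 2 ≤ Bxu δ G E d w U x := by linarith
  simpa [hκ_def] using this


lemma sum_basis_sq {m : ℕ} (i0 : Fin m) :
    ∑ j, (if j = i0 then (1:ℝ) else 0) ^ 2 = 1 := by
  rw [Finset.sum_eq_single i0 (fun b _ hb => by simp [hb])
    (fun h => absurd (Finset.mem_univ i0) h)]
  simp

/-- Explicit upper bound for `Bxu`. -/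
lemma bxu_upper {nm n q : ℕ} {δ : ℝ} (hδ : 0 < δ) (G : Matrix (Fin q) (Fin nm) ℝ)
    (E : Matrix (Fin q) (Fin n) ℝ) (d w : Fin q → ℝ)
    (hδd : ∀ i, δ ≤ d i) (hw : ∀ i, 0 ≤ w i) (U : Fin nm → ℝ) (x : Fin n → ℝ) :
    Bxu δ G E d w U x ≤
      ((2 / δ + 1 / (2 * δ ^ 2)) * ∑ i, (1 + w i) * Rv G E i) * pairNorm U x
      + ((2 / δ + 1 / (2 * δ ^ 2)) * ∑ i, (1 + w i) * (Rv G E i) ^ 2) * (pairNorm U x) ^ 2 := by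
  classical
  set K := 2 / δ + 1 / (2 * δ ^ 2) with hK_def
  have hK0 : 0 ≤ K := by rw [hK_def]; positivity
  set r := pairNorm U x with hr_def
  have hr0 : 0 ≤ r := pairNorm_nonneg U x
  rw [bxu_formula_one δ G E d w U x]
  have hstep : ∀ i : Fin q, (1 + w i) * (Bhat δ (d i + 1 * sfun G E U x i) + Real.log (d i))
      ≤ (1 + w i) * (K * (Rv G E i * r + (Rv G E i) ^ 2 * r ^ 2)) := by
    intro i
    have h1w : (0:ℝ) ≤ 1 + w i := by linarith [hw i]
    apply mul_le_mul_of_nonneg_left _ h1w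
    rw [one_mul]
    refine (bhat_upper hδ (hδd i) (sfun G E U x i)).trans ?_
    have habs : |sfun G E U x i| ≤ Rv G E i * r := sfun_bound G E U x i
    have hsq : (sfun G E U x i) ^ 2 ≤ (Rv G E i) ^ 2 * r ^ 2 := by
      calc (sfun G E U x i) ^ 2 = |sfun G E U x i| ^ 2 := (sq_abs _).symm
        _ ≤ (Rv G E i * r) ^ 2 := by
            apply pow_le_pow_left₀ (abs_nonneg _) habs
        _ = (Rv G E i) ^ 2 * r ^ 2 := by ring
    apply mul_le_mul_of_nonneg_left _ hK0
    exact add_le_add habs hsq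
  calc (∑ i, (1 + w i) * (Bhat δ (d i + 1 * sfun G E U x i) + Real.log (d i)))
      ≤ ∑ i, (1 + w i) * (K * (Rv G E i * r + (Rv G E i) ^ 2 * r ^ 2)) :=
        Finset.sum_le_sum (fun i _ => hstep i)
    _ = (K * ∑ i, (1 + w i) * Rv G E i) * r
        + (K * ∑ i, (1 + w i) * (Rv G E i) ^ 2) * r ^ 2 := by
        rw [Finset.mul_sum, Finset.mul_sum, Finset.sum_mul, Finset.sum_mul,
          ← Finset.sum_add_distrib]
        apply Finset.sum_congr rfl
        intro i _
        ring


end Aux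

/-- (Lemma 1, part i) If the quadratic part of the cost is positive semidefinite, `ε > 0`,
the combined constraint polytope `Z = {(U,x) : GU − Ex ≤ d}` is compact, `0 < δ ≤ min_i dⁱ`,
the weights are nonnegative and chosen so that the gradient of `B̂_xu` vanishes at the
origin, then the cost `Ĵ_N` is sandwiched between two class-`K∞` functions of `‖(U,x)‖`. -/
theorem cost_KInfty_bounds
    {nm n q : ℕ} (δ ε : ℝ) (H : Matrix (Fin nm) (Fin nm) ℝ)
    (F : Matrix (Fin n) (Fin nm) ℝ) (Y : Matrix (Fin n) (Fin n) ℝ)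
    (G : Matrix (Fin q) (Fin nm) ℝ) (E : Matrix (Fin q) (Fin n) ℝ) (d w : Fin q → ℝ)
    (hδ : 0 < δ) (hε : 0 < ε)
    (hd : ∀ i, 0 < d i) (hδd : ∀ i, δ ≤ d i) (hw : ∀ i, 0 ≤ w i)
    (hquad : ∀ (U : Fin nm → ℝ) (x : Fin n → ℝ),
      0 ≤ (1 / 2) * (U ⬝ᵥ H.mulVec U) + x ⬝ᵥ F.mulVec U + x ⬝ᵥ Y.mulVec x)
    (hcompact : ∀ (U : Fin nm → ℝ) (x : Fin n → ℝ),
      G.mulVec U - E.mulVec x ≤ 0 → U = 0 ∧ x = 0)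
    (hrecenter : fderiv ℝ
      (fun p : (Fin nm → ℝ) × (Fin n → ℝ) => Bxu δ G E d w p.1 p.2) (0, 0) = 0) :
    ∃ αlow αup : ℝ → ℝ, IsKInfty αlow ∧ IsKInfty αup ∧
      ∀ (U : Fin nm → ℝ) (x : Fin n → ℝ),
        αlow (pairNorm U x) ≤ Jcost δ ε H F Y G E d w U x ∧
        Jcost δ ε H F Y G E d w U x ≤ αup (pairNorm U x) := by
  classical
  by_cases htriv : nm = 0 ∧ n = 0
  · -- trivial case : everything is zero
    obtain ⟨hnm, hn⟩ := htriv
    subst hnm; subst hn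
    have hKid : IsKInfty (fun r : ℝ => r) :=
      ⟨continuous_id.continuousOn, fun a _ b _ h => h, rfl, Filter.tendsto_id⟩
    refine ⟨(fun r : ℝ => r), (fun r : ℝ => r), hKid, hKid, ?_⟩
    intro U x
    have hpn : pairNorm U x = 0 := by simp [pairNorm]
    have hmvG : ∀ i, G.mulVec U i = 0 := by
      intro i; simp [Matrix.mulVec, dotProduct]
    have hmvE : ∀ i, E.mulVec x i = 0 := by
      intro i; simp [Matrix.mulVec, dotProduct]
    have hBxu0 : Bxu δ G E d w U x = 0 := by
      unfold Bxu
      apply Finset.sum_eq_zero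
      intro i _
      rw [hmvG i, hmvE i]
      have : -(0:ℝ) + 0 + d i = d i := by ring
      rw [this, bhat_at hδ (hδd i)]
      ring
    have hJ : Jcost δ ε H F Y G E d w U x = 0 := by
      unfold Jcost
      rw [hBxu0]
      simp [dotProduct]
    rw [hpn, hJ]
    exact ⟨le_refl 0, le_refl 0⟩
  · -- nontrivial case
    -- notation
    set P := (Fin nm → ℝ) × (Fin n → ℝ)
    set K := 2 / δ + 1 / (2 * δ ^ 2) with hK_def
    have hK0 : 0 ≤ K := by rw [hK_def]; positivity
    set A1 := K * ∑ i, (1 + w i) * Rv G E i with hA1_def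
    set A2 := K * ∑ i, (1 + w i) * (Rv G E i) ^ 2 with hA2_def
    have h1w : ∀ i, (0:ℝ) ≤ 1 + w i := fun i => by linarith [hw i]
    have hA1 : 0 ≤ A1 := by
      rw [hA1_def]
      apply mul_nonneg hK0
      apply Finset.sum_nonneg
      intro i _
      exact mul_nonneg (h1w i) (Rv_nonneg G E i)
    have hA2 : 0 ≤ A2 := by
      rw [hA2_def]
      apply mul_nonneg hK0
      apply Finset.sum_nonneg
      intro i _
      exact mul_nonneg (h1w i) (sq_nonneg _)
    set Cq := (1/2 : ℝ) * (∑ i, ∑ j, |H i j|) + (∑ i, ∑ j, |F i j|) + (∑ i, ∑ j, |Y i j|)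
      with hCq_def
    have hCq : 0 ≤ Cq := by
      rw [hCq_def]
      have h1 : (0:ℝ) ≤ ∑ i, ∑ j, |H i j| :=
        Finset.sum_nonneg fun i _ => Finset.sum_nonneg fun j _ => abs_nonneg _
      have h2 : (0:ℝ) ≤ ∑ i, ∑ j, |F i j| :=
        Finset.sum_nonneg fun i _ => Finset.sum_nonneg fun j _ => abs_nonneg _
      have h3 : (0:ℝ) ≤ ∑ i, ∑ j, |Y i j| :=
        Finset.sum_nonneg fun i _ => Finset.sum_nonneg fun j _ => abs_nonneg _
      linarith
    -- the recentering condition, in usable form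
    have hDv : ∀ (U : Fin nm → ℝ) (x : Fin n → ℝ),
        ∑ i, (1 + w i) * Dd δ (d i) * sfun G E U x i = 0 := by
      have hLmap : ∃ Lmap : P →ₗ[ℝ] (Fin q → ℝ),
          ∀ p : P, Lmap p = fun i => sfun G E p.1 p.2 i := by
        refine ⟨{ toFun := fun p => E.mulVec p.2 - G.mulVec p.1
                  map_add' := ?_
                  map_smul' := ?_ }, ?_⟩
        · intro p₁ p₂
          show E.mulVec (p₁.2 + p₂.2) - G.mulVec (p₁.1 + p₂.1) = _
          rw [Matrix.mulVec_add, Matrix.mulVec_add]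
          abel
        · intro c p
          show E.mulVec (c • p.2) - G.mulVec (c • p.1) = _
          rw [Matrix.mulVec_smul, Matrix.mulVec_smul, ← smul_sub]
          rfl
        · intro p
          funext i
          rfl
      obtain ⟨Lmap, hLmap⟩ := hLmap
      set ℓ : Fin q → (P →L[ℝ] ℝ) := fun i =>
        (ContinuousLinearMap.proj i).comp (LinearMap.toContinuousLinearMap Lmap)
        with hℓ_def
      have hℓ : ∀ (p : P) i, ℓ i p = sfun G E p.1 p.2 i := by
        intro p i
        have h1 : ℓ i p = Lmap p i := rfl
        rw [h1, hLmap p]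
      have hF : HasFDerivAt (fun p : P => Bxu δ G E d w p.1 p.2)
          (∑ i, ((1 + w i) * Dd δ (d i)) • ℓ i) ((0,0) : P) := by
        have hfun : (fun p : P => Bxu δ G E d w p.1 p.2)
            = fun p : P => ∑ i, (1 + w i) * (Bhat δ (d i + ℓ i p) + Real.log (d i)) := by
          funext p
          rw [bxu_formula_one δ G E d w p.1 p.2]
          apply Finset.sum_congr rfl
          intro i _
          rw [hℓ p i, one_mul]
        rw [hfun]
        apply HasFDerivAt.fun_sum
        intro i _
        have h1 : HasFDerivAt (fun p : P => d i + ℓ i p) (ℓ i) ((0,0) : P) :=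
          ((ℓ i).hasFDerivAt).const_add (d i)
        have hz : ℓ i ((0,0) : P) = 0 := by
          have : ((0,0) : P) = (0 : P) := rfl
          rw [this, map_zero]
        have h2 : HasDerivAt (Bhat δ) (Dd δ (d i)) (d i + ℓ i ((0,0) : P)) := by
          rw [hz, add_zero]
          exact bhat_hasDerivAt hδ (d i)
        have h3 := h2.comp_hasFDerivAt ((0,0) : P) h1
        have h4 := (h3.add_const (Real.log (d i))).const_mul (1 + w i)
        have h5 : (1 + w i) • (Dd δ (d i) • ℓ i) = ((1 + w i) * Dd δ (d i)) • ℓ i := by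
          rw [smul_smul]
        rw [← h5]
        exact h4
      have hD0 : (∑ i, ((1 + w i) * Dd δ (d i)) • ℓ i) = (0 : P →L[ℝ] ℝ) := by
        have hfd := hF.fderiv
        rw [hrecenter] at hfd
        exact hfd.symm
      intro U x
      have happ := congrArg (fun T : P →L[ℝ] ℝ => T ((U, x) : P)) hD0
      simp only [ContinuousLinearMap.coe_sum', Finset.sum_apply,
        ContinuousLinearMap.coe_smul', Pi.smul_apply, smul_eq_mul,
        ContinuousLinearMap.zero_apply] at happ
      have hcongr : ∀ i : Fin q, (1 + w i) * Dd δ (d i) * sfun G E U x i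
          = (1 + w i) * Dd δ (d i) * ℓ i ((U, x) : P) := by
        intro i
        rw [hℓ ((U, x) : P) i]
      rw [Finset.sum_congr rfl (fun i _ => hcongr i)]
      exact happ
    -- sphere minimum of the quadratic F0
    obtain ⟨lam, hlam_pos, hlam_min⟩ :
        ∃ lam : ℝ, 0 < lam ∧ ∀ (U : Fin nm → ℝ) (x : Fin n → ℝ), pairNorm U x = 1 →
          lam ≤ ∑ i, (sfun G E U x i) ^ 2 / (max δ (d i + Rv G E i)) ^ 2 := by
      set F0 : P → ℝ := fun p => ∑ i, (sfun G E p.1 p.2 i) ^ 2 / (max δ (d i + Rv G E i)) ^ 2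
        with hF0_def
      have hsfc : ∀ i, Continuous (fun p : P => sfun G E p.1 p.2 i) := by
        intro i
        have heq : (fun p : P => sfun G E p.1 p.2 i)
            = fun p : P => (∑ j, E i j * p.2 j) - (∑ j, G i j * p.1 j) := by
          funext p
          simp [sfun, Matrix.mulVec, dotProduct]
        rw [heq]
        apply Continuous.sub
        · exact continuous_finset_sum _ fun j _ =>
            (continuous_const.mul ((continuous_apply j).comp continuous_snd))
        · exact continuous_finset_sum _ fun j _ =>
            (continuous_const.mul ((continuous_apply j).comp continuous_fst))
      have hF0c : Continuous F0 := by
        rw [hF0_def]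
        exact continuous_finset_sum _ (fun i _ => ((hsfc i).pow 2).div_const _)
      have hNc : Continuous (fun p : P => pairNorm p.1 p.2) := by
        have heq : (fun p : P => pairNorm p.1 p.2)
            = fun p : P => Real.sqrt ((∑ i, (p.1 i) ^ 2) + ∑ j, (p.2 j) ^ 2) := rfl
        rw [heq]
        apply Real.continuous_sqrt.comp
        apply Continuous.add
        · exact continuous_finset_sum _ fun i _ =>
            ((continuous_apply i).comp continuous_fst).pow 2
        · exact continuous_finset_sum _ fun j _ =>
            ((continuous_apply j).comp continuous_snd).pow 2
      set S : Set P := {p : P | pairNorm p.1 p.2 = 1} with hS_def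
      have hSc : IsCompact S := by
        apply Metric.isCompact_of_isClosed_isBounded
        · exact isClosed_eq hNc continuous_const
        · apply Bornology.IsBounded.subset (Metric.isBounded_closedBall (x := (0:P)) (r := 1))
          intro p hp
          rw [Metric.mem_closedBall, dist_zero_right]
          rw [Prod.norm_def]
          have hp1 : pairNorm p.1 p.2 = 1 := hp
          apply max_le
          · rw [pi_norm_le_iff_of_nonneg zero_le_one]
            intro i
            rw [Real.norm_eq_abs]
            exact (abs_fst_le_pairNorm p.1 p.2 i).trans_eq hp1
          · rw [pi_norm_le_iff_of_nonneg zero_le_one]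
            intro j
            rw [Real.norm_eq_abs]
            exact (abs_snd_le_pairNorm p.1 p.2 j).trans_eq hp1
      have hSne : S.Nonempty := by
        rcases not_and_or.mp htriv with hnm | hn
        · set i0 : Fin nm := ⟨0, Nat.pos_of_ne_zero hnm⟩
          refine ⟨((fun j => if j = i0 then (1:ℝ) else 0), (0 : Fin n → ℝ)), ?_⟩
          show pairNorm _ _ = 1
          rw [pairNorm]
          rw [sum_basis_sq i0]
          simp
        · set j0 : Fin n := ⟨0, Nat.pos_of_ne_zero hn⟩
          refine ⟨((0 : Fin nm → ℝ), (fun j => if j = j0 then (1:ℝ) else 0)), ?_⟩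
          show pairNorm _ _ = 1
          rw [pairNorm]
          rw [sum_basis_sq j0]
          simp
      obtain ⟨p0, hp0S, hp0min'⟩ := hSc.exists_isMinOn hSne hF0c.continuousOn
      have hp0min : ∀ p ∈ S, F0 p0 ≤ F0 p := fun p hp => isMinOn_iff.mp hp0min' p hp
      have hterm_nonneg : ∀ (p : P) (i : Fin q),
          0 ≤ (sfun G E p.1 p.2 i) ^ 2 / (max δ (d i + Rv G E i)) ^ 2 := by
        intro p i
        positivity
      refine ⟨F0 p0, ?_, fun U x h1 => hp0min ((U, x) : P) h1⟩
      have h0le : 0 ≤ F0 p0 := Finset.sum_nonneg fun i _ => hterm_nonneg p0 i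
      rcases h0le.lt_or_eq with hlt | heq0
      · exact hlt
      · exfalso
        have hzero : ∀ i ∈ Finset.univ, (sfun G E p0.1 p0.2 i) ^ 2 / (max δ (d i + Rv G E i)) ^ 2 = 0 := by
          rw [← Finset.sum_eq_zero_iff_of_nonneg (fun i _ => hterm_nonneg p0 i)]
          exact heq0.symm
        have hsf0 : ∀ i, sfun G E p0.1 p0.2 i = 0 := by
          intro i
          have hMi : (0:ℝ) < max δ (d i + Rv G E i) := lt_of_lt_of_le hδ (le_max_left _ _)
          have := hzero i (Finset.mem_univ i)
          rw [div_eq_zero_iff] at this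
          rcases this with h | h
          · exact pow_eq_zero_iff (by norm_num) |>.mp h
          · exact absurd h (by positivity)
        have hle0 : G.mulVec p0.1 - E.mulVec p0.2 ≤ 0 := by
          intro i
          have := hsf0 i
          unfold sfun at this
          simp only [Pi.sub_apply, Pi.zero_apply]
          linarith
        obtain ⟨hU0, hx0⟩ := hcompact p0.1 p0.2 hle0
        have hp1 : pairNorm p0.1 p0.2 = 1 := hp0S
        rw [hU0, hx0] at hp1
        rw [pairNorm] at hp1
        simp at hp1
    -- the two comparison functions
    set αlow : ℝ → ℝ := fun r => (ε * lam / 2) * (r ^ 2 / (1 + r)) with hαlow_def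
    set αup : ℝ → ℝ := fun r => (1 + ε * A1) * r + (Cq + ε * A2) * r ^ 2 with hαup_def
    have hαlow_K : IsKInfty αlow := by
      have hc : 0 < ε * lam / 2 := by positivity
      refine ⟨?_, ?_, ?_, ?_⟩
      · apply ContinuousOn.mul continuousOn_const
        apply ContinuousOn.div
        · exact (continuous_pow 2).continuousOn
        · exact (continuous_const.add continuous_id).continuousOn
        · intro r hr
          have : (0:ℝ) ≤ r := hr
          intro h
          linarith [h]
      · intro r1 hr1 r2 hr2 h12
        have hr1' : (0:ℝ) ≤ r1 := hr1
        have hr2' : (0:ℝ) ≤ r2 := hr2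
        rw [hαlow_def]
        simp only
        apply mul_lt_mul_of_pos_left _ hc
        rw [div_lt_div_iff₀ (by linarith) (by linarith)]
        have hr2pos : 0 < r2 := lt_of_le_of_lt hr1' h12
        have hkey : 0 < (r2 - r1) * (r1 + r2 + r1 * r2) := by
          apply mul_pos (by linarith)
          nlinarith [mul_nonneg hr1' hr2']
        nlinarith [hkey]
      · rw [hαlow_def]; simp
      · apply Filter.tendsto_atTop_mono' _ _
          ((Filter.tendsto_atTop_add_const_right _ (-1) Filter.tendsto_id).const_mul_atTop hc)
        filter_upwards [Filter.eventually_ge_atTop (0:ℝ)] with r hr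
        rw [hαlow_def]
        simp only
        apply mul_le_mul_of_nonneg_left _ hc.le
        rw [le_div_iff₀ (by linarith)]
        simp only [id]
        nlinarith
    have hαup_K : IsKInfty αup := by
      have ha1 : (1:ℝ) ≤ 1 + ε * A1 := by nlinarith
      have ha2 : (0:ℝ) ≤ Cq + ε * A2 := by nlinarith
      refine ⟨?_, ?_, ?_, ?_⟩
      · apply Continuous.continuousOn
        exact (continuous_const.mul continuous_id).add
          (continuous_const.mul (continuous_pow 2))
      · intro r1 hr1 r2 hr2 h12
        have hr1' : (0:ℝ) ≤ r1 := hr1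
        rw [hαup_def]
        simp only
        have h1 : (1 + ε * A1) * r1 < (1 + ε * A1) * r2 := by nlinarith
        have h2 : (Cq + ε * A2) * r1 ^ 2 ≤ (Cq + ε * A2) * r2 ^ 2 := by
          have := pow_le_pow_left₀ hr1' h12.le 2
          nlinarith
        linarith
      · rw [hαup_def]; simp
      · apply Filter.tendsto_atTop_mono' _ _ Filter.tendsto_id
        filter_upwards [Filter.eventually_ge_atTop (0:ℝ)] with r hr
        rw [hαup_def]
        simp only [id]
        nlinarith
    refine ⟨αlow, αup, hαlow_K, hαup_K, ?_⟩
    intro U x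
    set r := pairNorm U x with hr_def
    have hr0 : 0 ≤ r := pairNorm_nonneg U x
    have hquadUx := hquad U x
    constructor
    · -- lower bound
      have hJB : ε * Bxu δ G E d w U x ≤ Jcost δ ε H F Y G E d w U x := by
        unfold Jcost
        linarith
      rcases le_or_gt r 1 with hr1 | hr1
      · -- small : use the ball bound and homogeneity
        have hball := bxu_ball hδ G E d w hδd hw hDv U x (by rw [← hr_def]; exact hr1)
        have hF0r : lam * r ^ 2 ≤ ∑ i, (sfun G E U x i) ^ 2 / (max δ (d i + Rv G E i)) ^ 2 := by
          rcases eq_or_lt_of_le hr0 with hr00 | hr00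
          · rw [← hr00]
            have hz : lam * (0:ℝ) ^ 2 = 0 := by norm_num
            rw [hz]
            apply Finset.sum_nonneg
            intro i _
            positivity
          · have hinv : pairNorm (r⁻¹ • U) (r⁻¹ • x) = 1 := by
              rw [pairNorm_smul, abs_of_pos (by positivity), ← hr_def, inv_mul_cancel₀ (ne_of_gt hr00)]
            have hmin := hlam_min (r⁻¹ • U) (r⁻¹ • x) hinv
            have hsc : ∀ i, (sfun G E (r⁻¹ • U) (r⁻¹ • x) i) ^ 2
                = r⁻¹ ^ 2 * (sfun G E U x i) ^ 2 := by
              intro i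
              rw [sfun_smul]
              ring
            have hsum_sc : (∑ i, (sfun G E (r⁻¹ • U) (r⁻¹ • x) i) ^ 2 / (max δ (d i + Rv G E i)) ^ 2)
                = r⁻¹ ^ 2 * ∑ i, (sfun G E U x i) ^ 2 / (max δ (d i + Rv G E i)) ^ 2 := by
              rw [Finset.mul_sum]
              apply Finset.sum_congr rfl
              intro i _
              rw [hsc i]
              ring
            rw [hsum_sc] at hmin
            have hr2 : 0 < r ^ 2 := by positivity
            rw [← sub_nonneg] at hmin ⊢
            have hkey : r ^ 2 * (r⁻¹ ^ 2 * (∑ i, (sfun G E U x i) ^ 2 / (max δ (d i + Rv G E i)) ^ 2) - lam)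
                = (∑ i, (sfun G E U x i) ^ 2 / (max δ (d i + Rv G E i)) ^ 2) - lam * r ^ 2 := by
              field_simp
            rw [← hkey]
            exact mul_nonneg hr2.le (by linarith)
        have hlow : αlow r ≤ ε * (lam * r ^ 2 / 2) := by
          have hdle : r ^ 2 / (1 + r) ≤ r ^ 2 := div_le_self (sq_nonneg r) (by linarith)
          calc αlow r = (ε * lam / 2) * (r ^ 2 / (1 + r)) := by rw [hαlow_def]
            _ ≤ (ε * lam / 2) * r ^ 2 := by
                apply mul_le_mul_of_nonneg_left hdle (by positivity)
            _ = ε * (lam * r ^ 2 / 2) := by ring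
        have : ε * (lam * r ^ 2 / 2) ≤ ε * Bxu δ G E d w U x := by
          apply mul_le_mul_of_nonneg_left _ hε.le
          calc lam * r ^ 2 / 2 ≤ (∑ i, (sfun G E U x i) ^ 2 / (max δ (d i + Rv G E i)) ^ 2) / 2 := by
                linarith
            _ ≤ Bxu δ G E d w U x := hball
        linarith
      · -- large : use ray convexity
        have hrpos : 0 < r := by linarith
        have hinv : pairNorm (r⁻¹ • U) (r⁻¹ • x) = 1 := by
          rw [pairNorm_smul, abs_of_pos (by positivity), ← hr_def, inv_mul_cancel₀ (ne_of_gt hrpos)]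
        have hball := bxu_ball hδ G E d w hδd hw hDv (r⁻¹ • U) (r⁻¹ • x) (le_of_eq hinv)
        have hmin := hlam_min (r⁻¹ • U) (r⁻¹ • x) hinv
        have hBu : lam / 2 ≤ Bxu δ G E d w (r⁻¹ • U) (r⁻¹ • x) := by
          linarith [hball, hmin]
        -- ray convexity
        have hconv := bxu_ray_convex δ hδ d w hw (sfun G E U x)
        have hg0 : (∑ i, (1 + w i) * (Bhat δ (d i + (0:ℝ) * sfun G E U x i) + Real.log (d i))) = 0 := by
          apply Finset.sum_eq_zero
          intro i _
          have harg : d i + 0 * sfun G E U x i = d i := by ring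
          rw [harg, bhat_at hδ (hδd i)]
          ring
        have hinv1 : r⁻¹ ≤ 1 := by
          rw [inv_eq_one_div]
          exact (div_le_one hrpos).mpr hr1.le
        have hcomb := hconv.2 (Set.mem_univ (0:ℝ)) (Set.mem_univ (1:ℝ))
          (by linarith : (0:ℝ) ≤ 1 - r⁻¹)
          (by positivity : (0:ℝ) ≤ r⁻¹) (by ring)
        simp only [smul_eq_mul, mul_zero, mul_one, zero_add] at hcomb
        rw [hg0, mul_zero, zero_add] at hcomb
        -- hcomb : gv r⁻¹ ≤ r⁻¹ * gv 1
        have hgu : (∑ i, (1 + w i) * (Bhat δ (d i + r⁻¹ * sfun G E U x i) + Real.log (d i)))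
            = Bxu δ G E d w (r⁻¹ • U) (r⁻¹ • x) :=
          (bxu_formula δ G E d w U x r⁻¹).symm
        have hg1 : (∑ i, (1 + w i) * (Bhat δ (d i + 1 * sfun G E U x i) + Real.log (d i)))
            = Bxu δ G E d w U x := (bxu_formula_one δ G E d w U x).symm
        rw [hgu, hg1] at hcomb
        have hBv : r * (lam / 2) ≤ Bxu δ G E d w U x := by
          have h1 : r * (lam / 2) ≤ r * Bxu δ G E d w (r⁻¹ • U) (r⁻¹ • x) :=
            mul_le_mul_of_nonneg_left hBu hr0
          have h2 : r * Bxu δ G E d w (r⁻¹ • U) (r⁻¹ • x)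
              ≤ r * (r⁻¹ * Bxu δ G E d w U x) :=
            mul_le_mul_of_nonneg_left hcomb hr0
          have h3 : r * (r⁻¹ * Bxu δ G E d w U x) = Bxu δ G E d w U x := by
            field_simp
          linarith
        have hlow : αlow r ≤ ε * (r * (lam / 2)) := by
          have hdle : r ^ 2 / (1 + r) ≤ r := by
            rw [div_le_iff₀ (by linarith)]
            nlinarith
          calc αlow r = (ε * lam / 2) * (r ^ 2 / (1 + r)) := by rw [hαlow_def]
            _ ≤ (ε * lam / 2) * r := by
                apply mul_le_mul_of_nonneg_left hdle (by positivity)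
            _ = ε * (r * (lam / 2)) := by ring
        have : ε * (r * (lam / 2)) ≤ ε * Bxu δ G E d w U x :=
          mul_le_mul_of_nonneg_left hBv hε.le
        linarith
    · -- upper bound
      have hquad_up : (1 / 2) * (U ⬝ᵥ H.mulVec U) + x ⬝ᵥ F.mulVec U + x ⬝ᵥ Y.mulVec x
          ≤ Cq * r ^ 2 := by
        have h1 := dot_mulVec_bound H U U hr0 (abs_fst_le_pairNorm U x) (abs_fst_le_pairNorm U x)
        have h2 := dot_mulVec_bound F x U hr0 (abs_snd_le_pairNorm U x) (abs_fst_le_pairNorm U x)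
        have h3 := dot_mulVec_bound Y x x hr0 (abs_snd_le_pairNorm U x) (abs_snd_le_pairNorm U x)
        rw [hCq_def]
        nlinarith [h1, h2, h3]
      have hB_up := bxu_upper hδ G E d w hδd hw U x
      rw [← hK_def, ← hr_def, ← hA1_def, ← hA2_def] at hB_up
      have : Jcost δ ε H F Y G E d w U x ≤ Cq * r ^ 2 + ε * (A1 * r + A2 * r ^ 2) := by
        unfold Jcost
        have hεB : ε * Bxu δ G E d w U x ≤ ε * (A1 * r + A2 * r ^ 2) := by
          apply mul_le_mul_of_nonneg_left _ hε.le
          linarith [hB_up]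
        linarith
      rw [hαup_def]
      simp only
      nlinarith [this]
end

section
/- Let Q ∈ ℝ^{n×n} be symmetric positive semidefinite, R ∈ ℝ^{m×m} symmetric positive definite, M_x ∈ ℝ^{n×n} and M_u ∈ ℝ^{m×m} symmetric positive semidefinite, ε > 0, and suppose K ∈ ℝ^{m×n} and symmetric P ∈ ℝ^{n×n} satisfy the Riccati-type equation P = (A+BK)ᵀP(A+BK) + Kᵀ(R+εM_u)K + Q + εM_x. If the barrier functions satisfy the quadratic bounds B̂_x(x) ≤ xᵀM_x x for all x ∈ ℝⁿ and B̂_u(u) ≤ uᵀM_u u for all u ∈ ℝᵐ, then for all x ∈ ℝⁿ: ((A+BK)x)ᵀP((A+BK)x) − xᵀPx ≤ −(xᵀQx + (Kx)ᵀR(Kx) + ε·B̂_x(x) + ε·B̂_u(Kx)). -/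
open Matrix

open Matrix in
lemma quad_conj {n m : ℕ} (N : Matrix (Fin n) (Fin m) ℝ) (M : Matrix (Fin n) (Fin n) ℝ)
    (x : Fin m → ℝ) : x ⬝ᵥ (Nᵀ * M * N) *ᵥ x = (N.mulVec x) ⬝ᵥ M.mulVec (N.mulVec x) := by
  simp [dotProduct_mulVec, ← Matrix.vecMul_vecMul, Matrix.vecMul_transpose]

/-- If `K` and symmetric `P` satisfy the Riccati-type equation
`P = (A+BK)ᵀP(A+BK) + Kᵀ(R+εM_u)K + Q + εM_x`, and the barrier functions obey the
quadratic bounds `B̂_x(x) ≤ xᵀM_x x` and `B̂_u(u) ≤ uᵀM_u u`, then the terminal cost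
`F̂(x) = xᵀPx` decreases along the local feedback `u = Kx` by at least the stage cost
`ℓ̂(x,Kx)`. -/
theorem terminal_cost_decrease
    {n m : ℕ}
    (A : Matrix (Fin n) (Fin n) ℝ) (B : Matrix (Fin n) (Fin m) ℝ)
    (Q : Matrix (Fin n) (Fin n) ℝ) (R : Matrix (Fin m) (Fin m) ℝ)
    (Mx : Matrix (Fin n) (Fin n) ℝ) (Mu : Matrix (Fin m) (Fin m) ℝ)
    (K : Matrix (Fin m) (Fin n) ℝ) (P : Matrix (Fin n) (Fin n) ℝ)
    (ε : ℝ) (hε : 0 < ε)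
    (Bx : (Fin n → ℝ) → ℝ) (Bu : (Fin m → ℝ) → ℝ)
    (hQsymm : Q.IsSymm) (hQpsd : ∀ x : Fin n → ℝ, 0 ≤ x ⬝ᵥ Q.mulVec x)
    (hRsymm : R.IsSymm) (hRpd : ∀ u : Fin m → ℝ, u ≠ 0 → 0 < u ⬝ᵥ R.mulVec u)
    (hMxsymm : Mx.IsSymm) (hMxpsd : ∀ x : Fin n → ℝ, 0 ≤ x ⬝ᵥ Mx.mulVec x)
    (hMusymm : Mu.IsSymm) (hMupsd : ∀ u : Fin m → ℝ, 0 ≤ u ⬝ᵥ Mu.mulVec u)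
    (hPsymm : P.IsSymm)
    (hRiccati : P = (A + B * K)ᵀ * P * (A + B * K) + Kᵀ * (R + ε • Mu) * K + Q + ε • Mx)
    (hBx : ∀ x : Fin n → ℝ, Bx x ≤ x ⬝ᵥ Mx.mulVec x)
    (hBu : ∀ u : Fin m → ℝ, Bu u ≤ u ⬝ᵥ Mu.mulVec u) :
    ∀ x : Fin n → ℝ,
      ((A + B * K).mulVec x) ⬝ᵥ P.mulVec ((A + B * K).mulVec x) - x ⬝ᵥ P.mulVec x ≤
        -(x ⬝ᵥ Q.mulVec x + (K.mulVec x) ⬝ᵥ R.mulVec (K.mulVec x) +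
          ε * Bx x + ε * Bu (K.mulVec x)) := by
  intro x
  have hx : x ⬝ᵥ P.mulVec x =
      ((A + B * K).mulVec x) ⬝ᵥ P.mulVec ((A + B * K).mulVec x) +
        ((K.mulVec x) ⬝ᵥ R.mulVec (K.mulVec x) +
          ε * ((K.mulVec x) ⬝ᵥ Mu.mulVec (K.mulVec x))) +
        x ⬝ᵥ Q.mulVec x + ε * (x ⬝ᵥ Mx.mulVec x) := by
    conv_lhs => rw [hRiccati]
    simp only [Matrix.add_mulVec, Matrix.smul_mulVec, dotProduct_add,
      dotProduct_smul, smul_eq_mul, quad_conj,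
      Matrix.mulVec_add, add_dotProduct]
  have h1 := hBx x
  have h2 := hBu (K.mulVec x)
  nlinarith [hε.le, mul_le_mul_of_nonneg_left h1 hε.le, mul_le_mul_of_nonneg_left h2 hε.le]
end

section
/- (Lemma 1, part iii) Suppose K ∈ ℝ^{m×n} and the symmetric positive definite P satisfy P = (A+BK)ᵀP(A+BK) + Kᵀ(R+εM_u)K + Q + εM_x for symmetric positive semidefinite M_x, M_u with B̂_x(x) ≤ xᵀM_x x for all x and B̂_u(u) ≤ uᵀM_u u for all u. Define k_f(U,x) := K·x_N(U,x). Then k_f(0,0) = 0, and for every (U,x) ∈ ℝ^{Nm}×ℝⁿ with U = (u₀,…,u_{N−1}), successor state x⁺ := Ax + Bu₀, and shifted sequence U⁺ := (u₁,…,u_{N−1}, k_f(U,x)), one has Ĵ_N(U⁺, x⁺) − Ĵ_N(U,x) ≤ −ℓ̂(x, u₀). -/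
open Matrix

/-- Predicted states: `x₀(U,x) = x`, `x_{k+1}(U,x) = A x_k(U,x) + B u_k`. -/
noncomputable def predState {n m N : ℕ} (A : Matrix (Fin n) (Fin n) ℝ)
    (B : Matrix (Fin n) (Fin m) ℝ) (u : Fin N → Fin m → ℝ) (x : Fin n → ℝ) :
    ℕ → Fin n → ℝ
  | 0 => x
  | k + 1 => A.mulVec (predState A B u x k) +
      (if h : k < N then B.mulVec (u ⟨k, h⟩) else 0)

/-- The relaxed stage cost `ℓ̂(x,u) = xᵀQx + uᵀRu + ε B̂_x(x) + ε B̂_u(u)`. -/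
noncomputable def stageCost {n m : ℕ} (Q : Matrix (Fin n) (Fin n) ℝ)
    (R : Matrix (Fin m) (Fin m) ℝ) (ε : ℝ)
    (Bx : (Fin n → ℝ) → ℝ) (Bu : (Fin m → ℝ) → ℝ)
    (x : Fin n → ℝ) (u : Fin m → ℝ) : ℝ :=
  x ⬝ᵥ Q.mulVec x + u ⬝ᵥ R.mulVec u + ε * Bx x + ε * Bu u

/-- The relaxed barrier function based MPC cost
`Ĵ_N(U,x) = Σ_{k<N} ℓ̂(x_k(U,x),u_k) + x_N(U,x)ᵀ P x_N(U,x)`. -/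
noncomputable def mpcCost {n m N : ℕ} (A : Matrix (Fin n) (Fin n) ℝ)
    (B : Matrix (Fin n) (Fin m) ℝ) (Q : Matrix (Fin n) (Fin n) ℝ)
    (R : Matrix (Fin m) (Fin m) ℝ) (P : Matrix (Fin n) (Fin n) ℝ) (ε : ℝ)
    (Bx : (Fin n → ℝ) → ℝ) (Bu : (Fin m → ℝ) → ℝ)
    (u : Fin N → Fin m → ℝ) (x : Fin n → ℝ) : ℝ :=
  (∑ k : Fin N, stageCost Q R ε Bx Bu (predState A B u x k) (u k)) +
    (predState A B u x N) ⬝ᵥ P.mulVec (predState A B u x N)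

/-- The shift operator `Ψ_s(U,x) = (u₁,…,u_{N−1}, k_f(U,x))`. -/
def shiftOp {n m N : ℕ} (kf : (Fin N → Fin m → ℝ) → (Fin n → ℝ) → Fin m → ℝ)
    (u : Fin N → Fin m → ℝ) (x : Fin n → ℝ) : Fin N → Fin m → ℝ :=
  fun i => if h : (i : ℕ) + 1 < N then u ⟨(i : ℕ) + 1, h⟩ else kf u x

/-- (Lemma 1, part iii) Under the Riccati-type equation for `(K,P)` and the quadratic
upper bounds on the relaxed barrier functions, the candidate `k_f(U,x) = K x_N(U,x)`
yields the shift decrease property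
`Ĵ_N(U⁺,x⁺) − Ĵ_N(U,x) ≤ −ℓ̂(x,u₀)` with `x⁺ = Ax + Bu₀` and
`U⁺ = (u₁,…,u_{N−1},k_f(U,x))`, and `k_f(0,0) = 0`. -/
theorem shift_decrease_property
    {n m N : ℕ} [NeZero N]
    (A : Matrix (Fin n) (Fin n) ℝ) (B : Matrix (Fin n) (Fin m) ℝ)
    (Q : Matrix (Fin n) (Fin n) ℝ) (R : Matrix (Fin m) (Fin m) ℝ)
    (Mx : Matrix (Fin n) (Fin n) ℝ) (Mu : Matrix (Fin m) (Fin m) ℝ)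
    (K : Matrix (Fin m) (Fin n) ℝ) (P : Matrix (Fin n) (Fin n) ℝ)
    (ε : ℝ) (hε : 0 < ε)
    (Bx : (Fin n → ℝ) → ℝ) (Bu : (Fin m → ℝ) → ℝ)
    (hQsymm : Q.IsSymm) (hQpsd : ∀ x : Fin n → ℝ, 0 ≤ x ⬝ᵥ Q.mulVec x)
    (hRsymm : R.IsSymm) (hRpd : ∀ u : Fin m → ℝ, u ≠ 0 → 0 < u ⬝ᵥ R.mulVec u)
    (hPsymm : P.IsSymm) (hPpd : ∀ x : Fin n → ℝ, x ≠ 0 → 0 < x ⬝ᵥ P.mulVec x)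
    (hMxsymm : Mx.IsSymm) (hMxpsd : ∀ x : Fin n → ℝ, 0 ≤ x ⬝ᵥ Mx.mulVec x)
    (hMusymm : Mu.IsSymm) (hMupsd : ∀ u : Fin m → ℝ, 0 ≤ u ⬝ᵥ Mu.mulVec u)
    (hRiccati : P = (A + B * K)ᵀ * P * (A + B * K) + Kᵀ * (R + ε • Mu) * K + Q + ε • Mx)
    (hBx : ∀ x : Fin n → ℝ, Bx x ≤ x ⬝ᵥ Mx.mulVec x)
    (hBu : ∀ u : Fin m → ℝ, Bu u ≤ u ⬝ᵥ Mu.mulVec u) :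
    (fun (u : Fin N → Fin m → ℝ) (x : Fin n → ℝ) =>
        K.mulVec (predState A B u x N)) 0 0 = 0 ∧
    ∀ (u : Fin N → Fin m → ℝ) (x : Fin n → ℝ),
      mpcCost A B Q R P ε Bx Bu
          (shiftOp (fun u' x' => K.mulVec (predState A B u' x' N)) u x)
          (A.mulVec x + B.mulVec (u 0)) -
        mpcCost A B Q R P ε Bx Bu u x ≤
      -(stageCost Q R ε Bx Bu x (u 0)) := by
  obtain ⟨M, rfl⟩ := Nat.exists_eq_succ_of_ne_zero (NeZero.ne N)
  have hPz : ∀ z : Fin n → ℝ,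
      z ⬝ᵥ P.mulVec z = ((A+B*K).mulVec z) ⬝ᵥ P.mulVec ((A+B*K).mulVec z)
        + (K.mulVec z) ⬝ᵥ R.mulVec (K.mulVec z)
        + ε * ((K.mulVec z) ⬝ᵥ Mu.mulVec (K.mulVec z))
        + z ⬝ᵥ Q.mulVec z + ε * (z ⬝ᵥ Mx.mulVec z) := by
    intro z
    conv_lhs => rw [hRiccati]
    simp [Matrix.add_mulVec, dotProduct_add, Matrix.smul_mulVec,
      dotProduct_smul, ← Matrix.mulVec_mulVec, Matrix.dotProduct_mulVec,
      Matrix.vecMul_transpose, smul_eq_mul]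
    simp [Matrix.add_vecMul, add_dotProduct]
    ring
  have key : ∀ z : Fin n → ℝ,
      stageCost Q R ε Bx Bu z (K.mulVec z)
        + ((A+B*K).mulVec z) ⬝ᵥ P.mulVec ((A+B*K).mulVec z) ≤ z ⬝ᵥ P.mulVec z := by
    intro z
    rw [hPz z]
    unfold stageCost
    have h1 := mul_le_mul_of_nonneg_left (hBx z) hε.le
    have h2 := mul_le_mul_of_nonneg_left (hBu (K.mulVec z)) hε.le
    linarith
  constructor
  · have h0 : ∀ k, predState A B (0 : Fin (M+1) → Fin m → ℝ) (0 : Fin n → ℝ) k = 0 := by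
      intro k
      induction k with
      | zero => rfl
      | succ k ih => simp [predState, ih]
    simp only [h0, Matrix.mulVec_zero]
  · intro u x
    set u' := shiftOp (fun u' x' => K.mulVec (predState A B u' x' (M+1))) u x with hu'
    set x' := A.mulVec x + B.mulVec (u 0) with hx'
    have hshift : ∀ k, k ≤ M → predState A B u' x' k = predState A B u x (k+1) := by
      intro k hk
      induction k with
      | zero =>
        show x' = predState A B u x 1
        simp [predState, hx']
      | succ k ih =>
        have hk' : k ≤ M := Nat.le_of_succ_le hk
        have hk2 : k + 1 < M + 1 := Nat.succ_lt_succ (Nat.lt_of_succ_le hk)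
        show A.mulVec (predState A B u' x' k) + _ = A.mulVec (predState A B u x (k+1)) + _
        rw [ih hk']
        congr 1
        have hcu : u' ⟨k, Nat.lt_succ_of_le hk'⟩ = u ⟨k+1, hk2⟩ := by
          rw [hu']; unfold shiftOp; exact dif_pos hk2
        rw [dif_pos (Nat.lt_succ_of_le hk'), dif_pos hk2, hcu]
    set z := predState A B u x (M+1) with hz
    have hlast : u' ⟨M, Nat.lt_succ_self M⟩ = K.mulVec z := by
      rw [hu']; unfold shiftOp
      exact dif_neg (by simp)
    have hN : predState A B u' x' (M+1) = (A+B*K).mulVec z := by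
      show A.mulVec (predState A B u' x' M) + _ = _
      rw [hshift M le_rfl, dif_pos (Nat.lt_succ_self M)]
      rw [show (⟨M, Nat.lt_succ_self M⟩ : Fin (M+1)) = ⟨M, Nat.lt_succ_self M⟩ from rfl]
      rw [hlast, Matrix.add_mulVec, ← Matrix.mulVec_mulVec]
    unfold mpcCost
    rw [hN, ← hz]
    rw [Fin.sum_univ_castSucc
      (f := fun k : Fin (M+1) => stageCost Q R ε Bx Bu (predState A B u' x' k) (u' k))]
    rw [Fin.sum_univ_succ
      (f := fun k : Fin (M+1) => stageCost Q R ε Bx Bu (predState A B u x k) (u k))]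
    have hsum : ∀ i : Fin M,
        stageCost Q R ε Bx Bu (predState A B u' x' i.castSucc) (u' i.castSucc)
          = stageCost Q R ε Bx Bu (predState A B u x i.succ) (u i.succ) := by
      intro i
      have hi : (i : ℕ) + 1 < M + 1 := Nat.succ_lt_succ i.isLt
      have h1 : predState A B u' x' i.castSucc = predState A B u x i.succ := by
        rw [Fin.coe_castSucc, hshift i (Nat.le_of_lt_succ (Nat.lt_succ_of_lt i.isLt))]
        rfl
      have h2 : u' i.castSucc = u i.succ := by
        rw [hu']; unfold shiftOp
        rw [dif_pos (by simp [hi])]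
        congr 1
      rw [h1, h2]
    rw [Finset.sum_congr rfl (fun i _ => hsum i)]
    have hlast2 : stageCost Q R ε Bx Bu (predState A B u' x' ((Fin.last M) : Fin (M+1)))
        (u' (Fin.last M)) = stageCost Q R ε Bx Bu z (K.mulVec z) := by
      have h1 : predState A B u' x' ((Fin.last M : Fin (M+1)) : ℕ) = z := by
        rw [Fin.val_last, hshift M le_rfl, hz]
      have h2 : u' (Fin.last M) = K.mulVec z := hlast
      rw [h1, h2]
    rw [hlast2]
    have h0 : predState A B u x ((0 : Fin (M+1)) : ℕ) = x := rfl
    rw [h0]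
    have := key z
    linarith
end

section
/- Assume: ℓ̂ is positive definite (ℓ̂(x,u) > 0 for (x,u) ≠ (0,0), ℓ̂(0,0) = 0); Ĵ_N is continuously differentiable and strictly convex in U for each fixed x, nonnegative, and Ĵ_N(0,0) = 0; and γ satisfies γ(U,x) = 0 if and only if ∇_U Ĵ_N(U,x) = 0. If a pair (U,x) ∈ ℝ^{Nm}×ℝⁿ satisfies both ℓ̂(x, Π₀U) = 0 and γ(Ψ_s(U,x), Ax + BΠ₀U) = 0, then U = 0 and x = 0. -/
open Matrix

/-- A differentiable convex function on `univ` with zero derivative at `p` satisfies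
`f p ≤ f y` for all `y`. -/
lemma aux_le_of_fderiv_zero {E : Type*} [NormedAddCommGroup E] [NormedSpace ℝ E]
    {f : E → ℝ} (hdiff : Differentiable ℝ f) (hconv : ConvexOn ℝ Set.univ f)
    {p : E} (hderiv : fderiv ℝ f p = 0) (y : E) : f p ≤ f y := by
  set v := y - p with hv
  have hcurve : ∀ t : ℝ, HasDerivAt (fun s : ℝ => p + s • v) v t := by
    intro t
    simpa using ((hasDerivAt_id t).smul_const v).const_add p
  set g : ℝ → ℝ := fun t => f (p + t • v) with hg
  have hgd : HasDerivAt g 0 0 := by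
    have := (hdiff (p + (0:ℝ) • v)).hasFDerivAt.comp_hasDerivAt 0 (hcurve 0)
    simp [hderiv] at this
    exact this
  have hslope : ∀ t ∈ Set.Ioo (0:ℝ) 1, slope g 0 t ≤ f y - f p := by
    intro t ht
    have hpt : p + t • v = (1 - t) • p + t • y := by
      rw [hv]; module
    have hcv := hconv.2 (Set.mem_univ p) (Set.mem_univ y)
      (by linarith [ht.2] : (0:ℝ) ≤ 1 - t) (le_of_lt ht.1) (by ring)
    have hgt : g t ≤ (1 - t) * f p + t * f y := by
      rw [hg]; simp only [hpt]; simpa [smul_eq_mul] using hcv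
    have hg0 : g 0 = f p := by simp [g]
    rw [slope_def_field, div_eq_mul_inv]
    rw [hg0, sub_zero]
    have ht0 : (0:ℝ) < t := ht.1
    have : (g t - f p) ≤ t * (f y - f p) := by nlinarith [hgt]
    calc (g t - f p) * t⁻¹ ≤ (t * (f y - f p)) * t⁻¹ := by
          apply mul_le_mul_of_nonneg_right this (by positivity)
      _ = f y - f p := by field_simp
  have htend : Filter.Tendsto (slope g 0) (nhdsWithin 0 (Set.Ioi 0)) (nhds 0) := by
    have := hasDerivAt_iff_tendsto_slope.mp hgd
    exact this.mono_left (nhdsWithin_mono _ (fun t ht => ne_of_gt ht))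
  have hle : (0:ℝ) ≤ f y - f p := by
    refine le_of_tendsto htend ?_
    filter_upwards [Ioo_mem_nhdsGT_of_mem (by norm_num : (0:ℝ) ∈ Set.Ico 0 1)] with t ht
    exact hslope t ht
  linarith


/-- If the stage cost is positive definite, `Ĵ_N` is continuously differentiable and
strictly convex in `U`, nonnegative with `Ĵ_N(0,0) = 0`, and `γ` vanishes exactly at the
stationary points of `Ĵ_N(·,x)`, then any pair `(U,x)` with `ℓ̂(x,Π₀U) = 0` and
`γ(Ψ_s(U,x), Ax + BΠ₀U) = 0` must be the origin. -/
theorem invariance_set_is_origin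
    {n m N : ℕ} [NeZero N]
    (A : Matrix (Fin n) (Fin n) ℝ) (B : Matrix (Fin n) (Fin m) ℝ)
    (J : (Fin N → Fin m → ℝ) → (Fin n → ℝ) → ℝ)
    (lhat : (Fin n → ℝ) → (Fin m → ℝ) → ℝ)
    (kf : (Fin N → Fin m → ℝ) → (Fin n → ℝ) → Fin m → ℝ)
    (γ : (Fin N → Fin m → ℝ) → (Fin n → ℝ) → ℝ)
    (hlzero : lhat 0 0 = 0)
    (hlpos : ∀ (x : Fin n → ℝ) (u : Fin m → ℝ), ¬(x = 0 ∧ u = 0) → 0 < lhat x u)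
    (hJdiff : ∀ x : Fin n → ℝ, ContDiff ℝ 1 (fun u => J u x))
    (hJconv : ∀ x : Fin n → ℝ, StrictConvexOn ℝ Set.univ (fun u => J u x))
    (hJnonneg : ∀ (u : Fin N → Fin m → ℝ) (x : Fin n → ℝ), 0 ≤ J u x)
    (hJ00 : J 0 0 = 0)
    (hγzero : ∀ (u : Fin N → Fin m → ℝ) (x : Fin n → ℝ),
      γ u x = 0 ↔ fderiv ℝ (fun u' => J u' x) u = 0) :
    ∀ (u : Fin N → Fin m → ℝ) (x : Fin n → ℝ),
      lhat x (u 0) = 0 →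
      γ (shiftOp kf u x) (A.mulVec x + B.mulVec (u 0)) = 0 →
      u = 0 ∧ x = 0 := by
  intro u x hl hγ
  have hxu : x = 0 ∧ u 0 = 0 := by
    by_contra h
    exact (hlpos x (u 0) h).ne' hl
  obtain ⟨hx, hu0⟩ := hxu
  have hstate : A.mulVec x + B.mulVec (u 0) = 0 := by
    simp [hx, hu0, Matrix.mulVec_zero]
  rw [hstate, hγzero] at hγ
  set p := shiftOp kf u x with hp
  -- `p` is a global minimizer of `J · 0`, hence equals `0` by strict convexity
  have hfp_le : ∀ y, J p 0 ≤ J y 0 := by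
    have h1 := aux_le_of_fderiv_zero ((hJdiff 0).differentiable one_ne_zero)
      (hJconv 0).convexOn hγ (0 : Fin N → Fin m → ℝ)
    intro y
    have h2 : J p 0 ≤ 0 := by simpa [hJ00] using h1
    exact h2.trans (hJnonneg y 0)
  have hmin0 : IsMinOn (fun u' => J u' 0) Set.univ 0 := by
    intro y _
    simpa [hJ00] using hJnonneg y 0
  have hminp : IsMinOn (fun u' => J u' 0) Set.univ p := fun y _ => hfp_le y
  have hp0 : p = 0 := (hJconv 0).eq_of_isMinOn hminp hmin0 (Set.mem_univ _) (Set.mem_univ _)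
  refine ⟨?_, hx⟩
  funext i
  obtain ⟨iv, hi⟩ := i
  cases iv with
  | zero =>
      have : (⟨0, hi⟩ : Fin N) = 0 := rfl
      rw [this, hu0]; rfl
  | succ j =>
      have hj : j < N := by omega
      have := congrFun hp0 ⟨j, hj⟩
      simp only [hp, shiftOp] at this
      rw [dif_pos (show j + 1 < N from hi)] at this
      simpa using this
end

section
/- Let R ∈ ℝ^{m×m} be symmetric positive definite, Q ∈ ℝ^{n×n} symmetric positive semidefinite, and let the symmetric positive semidefinite matrix P ∈ ℝ^{n×n} satisfy the discrete-time algebraic Riccati equation P = AᵀPA − AᵀPB(R + BᵀPB)⁻¹BᵀPA + Q. Then for all x ∈ ℝⁿ and u ∈ ℝᵐ: xᵀQx + uᵀRu + (Ax+Bu)ᵀP(Ax+Bu) ≥ xᵀPx, with equality if and only if u = −(R + BᵀPB)⁻¹BᵀPA·x. -/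
open Matrix

lemma dp_trans {k l : ℕ} (M : Matrix (Fin k) (Fin l) ℝ) (x : Fin k → ℝ) (y : Fin l → ℝ) :
    x ⬝ᵥ M.mulVec y = Mᵀ.mulVec x ⬝ᵥ y := by
  rw [dotProduct_mulVec, mulVec_transpose]

lemma dp_mul {k l p : ℕ} (M : Matrix (Fin l) (Fin k) ℝ) (N : Matrix (Fin l) (Fin p) ℝ)
    (a : Fin k → ℝ) (b : Fin p → ℝ) :
    (M.mulVec a) ⬝ᵥ (N.mulVec b) = a ⬝ᵥ (Mᵀ * N).mulVec b := by
  conv_rhs => rw [← mulVec_mulVec, dp_trans, transpose_transpose]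

/-- If the symmetric positive semidefinite matrix `P` solves the discrete-time algebraic
Riccati equation `P = AᵀPA − AᵀPB(R+BᵀPB)⁻¹BᵀPA + Q` with `R` symmetric positive
definite and `Q` symmetric positive semidefinite, then the Bellman inequality
`xᵀQx + uᵀRu + (Ax+Bu)ᵀP(Ax+Bu) ≥ xᵀPx` holds for all `x, u`, with equality exactly
at the LQR feedback `u = −(R+BᵀPB)⁻¹BᵀPA x`. -/
theorem dare_bellman_inequality
    {n m : ℕ}
    (A : Matrix (Fin n) (Fin n) ℝ) (B : Matrix (Fin n) (Fin m) ℝ)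
    (Q : Matrix (Fin n) (Fin n) ℝ) (R : Matrix (Fin m) (Fin m) ℝ)
    (P : Matrix (Fin n) (Fin n) ℝ)
    (hQsymm : Q.IsSymm) (hQpsd : ∀ x : Fin n → ℝ, 0 ≤ x ⬝ᵥ Q.mulVec x)
    (hRsymm : R.IsSymm) (hRpd : ∀ u : Fin m → ℝ, u ≠ 0 → 0 < u ⬝ᵥ R.mulVec u)
    (hPsymm : P.IsSymm) (hPpsd : ∀ x : Fin n → ℝ, 0 ≤ x ⬝ᵥ P.mulVec x)
    (hDARE : P = Aᵀ * P * A - Aᵀ * P * B * (R + Bᵀ * P * B)⁻¹ * Bᵀ * P * A + Q) :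
    ∀ (x : Fin n → ℝ) (u : Fin m → ℝ),
      x ⬝ᵥ P.mulVec x ≤
        x ⬝ᵥ Q.mulVec x + u ⬝ᵥ R.mulVec u +
          (A.mulVec x + B.mulVec u) ⬝ᵥ P.mulVec (A.mulVec x + B.mulVec u) ∧
      (x ⬝ᵥ Q.mulVec x + u ⬝ᵥ R.mulVec u +
          (A.mulVec x + B.mulVec u) ⬝ᵥ P.mulVec (A.mulVec x + B.mulVec u) =
        x ⬝ᵥ P.mulVec x ↔
        u = -((R + Bᵀ * P * B)⁻¹ * Bᵀ * P * A).mulVec x) := by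
  intro x u
  obtain ⟨S, hSdef⟩ : ∃ S : Matrix (Fin m) (Fin m) ℝ, S = R + Bᵀ * P * B := ⟨_, rfl⟩
  rw [← hSdef] at hDARE ⊢
  have hSsymm : Sᵀ = S := by
    rw [hSdef, transpose_add, hRsymm.eq, transpose_mul, transpose_mul, transpose_transpose,
      hPsymm.eq, ← Matrix.mul_assoc]
  have hSpd : S.PosDef := by
    rw [posDef_iff_dotProduct_mulVec]
    constructor
    · show Sᴴ = S
      rw [conjTranspose_eq_transpose_of_trivial, hSsymm]
    · intro y hy
      show 0 < star y ⬝ᵥ S.mulVec y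
      have hstar : star y = y := by simp
      have h1 : y ⬝ᵥ (Bᵀ * P * B).mulVec y = (B.mulVec y) ⬝ᵥ P.mulVec (B.mulVec y) := by
        rw [dp_mul, mulVec_mulVec]
      rw [hstar, hSdef, add_mulVec, dotProduct_add, h1]
      have := hRpd y hy
      have := hPpsd (B.mulVec y)
      linarith
  have hSdet : IsUnit S.det := isUnit_iff_isUnit_det S |>.1 hSpd.isUnit
  have hSinv_mul : S⁻¹ * S = 1 := nonsing_inv_mul S hSdet
  have hmul_Sinv : S * S⁻¹ = 1 := mul_nonsing_inv S hSdet
  have hSinv_symm : (S⁻¹)ᵀ = S⁻¹ := by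
    rw [transpose_nonsing_inv, hSsymm]
  have htr : (Aᵀ * P * B)ᵀ = Bᵀ * P * A := by
    rw [transpose_mul, transpose_mul, transpose_transpose, hPsymm.eq, Matrix.mul_assoc]
  have htr2 : (Bᵀ * P * A)ᵀ = Aᵀ * P * B := by
    rw [← htr, transpose_transpose]
  obtain ⟨v, hvdef⟩ : ∃ v : Fin m → ℝ, v = (Bᵀ * P * A).mulVec x := ⟨_, rfl⟩
  obtain ⟨w, hwdef⟩ : ∃ w : Fin m → ℝ, w = u + S⁻¹.mulVec v := ⟨_, rfl⟩
  have hkey : x ⬝ᵥ Q.mulVec x + u ⬝ᵥ R.mulVec u +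
      (A.mulVec x + B.mulVec u) ⬝ᵥ P.mulVec (A.mulVec x + B.mulVec u)
      = x ⬝ᵥ P.mulVec x + w ⬝ᵥ S.mulVec w := by
    have hPx : x ⬝ᵥ P.mulVec x =
        x ⬝ᵥ (Aᵀ * P * A).mulVec x - x ⬝ᵥ (Aᵀ * P * B * S⁻¹ * Bᵀ * P * A).mulVec x
          + x ⬝ᵥ Q.mulVec x := by
      conv_lhs => rw [hDARE]
      rw [add_mulVec, sub_mulVec, dotProduct_add, dotProduct_sub]
    have hAA : (A.mulVec x) ⬝ᵥ P.mulVec (A.mulVec x) = x ⬝ᵥ (Aᵀ * P * A).mulVec x := by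
      rw [dp_mul, mulVec_mulVec]
    have hBA : (B.mulVec u) ⬝ᵥ P.mulVec (A.mulVec x) = u ⬝ᵥ v := by
      rw [dp_mul, mulVec_mulVec, ← hvdef]
    have hAB : (A.mulVec x) ⬝ᵥ P.mulVec (B.mulVec u) = u ⬝ᵥ v := by
      rw [dp_mul, mulVec_mulVec, dp_trans, htr, dotProduct_comm, ← hvdef]
    have hBB : (B.mulVec u) ⬝ᵥ P.mulVec (B.mulVec u) = u ⬝ᵥ (Bᵀ * P * B).mulVec u := by
      rw [dp_mul, mulVec_mulVec]
    have hcross : x ⬝ᵥ (Aᵀ * P * B * S⁻¹ * Bᵀ * P * A).mulVec x = v ⬝ᵥ S⁻¹.mulVec v := by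
      conv_rhs => rw [hvdef, mulVec_mulVec, dp_mul, htr2]
      simp only [Matrix.mul_assoc]
    have h1 : u ⬝ᵥ S.mulVec (S⁻¹.mulVec v) = u ⬝ᵥ v := by
      rw [mulVec_mulVec, hmul_Sinv, one_mulVec]
    have h2 : (S⁻¹.mulVec v) ⬝ᵥ S.mulVec u = u ⬝ᵥ v := by
      rw [dp_mul, hSinv_symm, hSinv_mul, one_mulVec, dotProduct_comm]
    have h3 : (S⁻¹.mulVec v) ⬝ᵥ S.mulVec (S⁻¹.mulVec v) = v ⬝ᵥ S⁻¹.mulVec v := by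
      rw [mulVec_mulVec, hmul_Sinv, one_mulVec, dotProduct_comm]
    have hwS : w ⬝ᵥ S.mulVec w =
        u ⬝ᵥ S.mulVec u + 2 * (u ⬝ᵥ v) + v ⬝ᵥ S⁻¹.mulVec v := by
      rw [hwdef, add_dotProduct, mulVec_add, dotProduct_add, dotProduct_add, h1, h2, h3]
      ring
    have hSu : u ⬝ᵥ S.mulVec u = u ⬝ᵥ R.mulVec u + u ⬝ᵥ (Bᵀ * P * B).mulVec u := by
      rw [hSdef, add_mulVec, dotProduct_add]
    rw [mulVec_add, dotProduct_add, add_dotProduct, add_dotProduct,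
      hAA, hBA, hAB, hBB, hwS, hSu, hPx, hcross]
    ring
  have hwSnonneg : 0 ≤ w ⬝ᵥ S.mulVec w := by
    by_cases hw : w = 0
    · simp [hw]
    · have := hSpd.dotProduct_mulVec_pos hw
      simpa using this.le
  refine ⟨by linarith, ?_⟩
  constructor
  · intro h
    have hw0 : w ⬝ᵥ S.mulVec w = 0 := by linarith
    have hwz : w = 0 := by
      by_contra hw
      have := hSpd.dotProduct_mulVec_pos hw
      simp only [star_trivial] at this
      linarith
    rw [hwdef] at hwz
    have hu : u = -(S⁻¹.mulVec v) := eq_neg_of_add_eq_zero_left hwz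
    rw [hu, hvdef, mulVec_mulVec, ← Matrix.mul_assoc, ← Matrix.mul_assoc]
  · intro h
    have hwz : w = 0 := by
      rw [hwdef, h, hvdef, mulVec_mulVec, ← Matrix.mul_assoc, ← Matrix.mul_assoc]
      simp
    rw [hkey, hwz]
    simp
end

section
/- Consider the closed-loop system and assume: Ĵ_N is given in the sum form with B̂_x ≥ 0 and B̂_u ≥ 0 pointwise; the shift decrease condition Ĵ_N(Ψ_s(U,x), Ax+BΠ₀U) − Ĵ_N(U,x) ≤ −ℓ̂(x,Π₀U) and the optimizer decrease condition Ĵ_N(Ψ_o(U,x),x) − Ĵ_N(U,x) ≤ −γ(U,x) with γ ≥ 0 hold for all (U,x); Ĵ_N ≥ 0; the closed-loop state trajectory satisfies x(k) → 0 as k → ∞; and P*_uc is a symmetric positive semidefinite solution of the DARE P*_uc = AᵀP*_uc A − AᵀP*_uc B(R + BᵀP*_uc B)⁻¹BᵀP*_uc A + Q. Then for every k ∈ ℕ, with u(k) = Π₀U(k): ε·B̂_x(x(k)) ≤ Ĵ_N(U(k),x(k)) − x(k)ᵀP*_uc x(k) and ε·B̂_u(u(k)) ≤ Ĵ_N(U(k),x(k))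 − x(k)ᵀP*_uc x(k). -/
open Matrix

/-- The iterated optimization operator. -/
def PhiIter {n m N : ℕ} [NeZero N] (A : Matrix (Fin n) (Fin n) ℝ)
    (B : Matrix (Fin n) (Fin m) ℝ)
    (kf : (Fin N → Fin m → ℝ) → (Fin n → ℝ) → Fin m → ℝ)
    (Ψo : (Fin N → Fin m → ℝ) → (Fin n → ℝ) → Fin N → Fin m → ℝ) :
    ℕ → (Fin N → Fin m → ℝ) → (Fin n → ℝ) → Fin N → Fin m → ℝ
  | 0, u, x => shiftOp kf u x
  | i + 1, u, x => Ψo (PhiIter A B kf Ψo i u x) (A.mulVec x + B.mulVec (u 0))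

/-- The closed-loop system `x(k+1) = Ax(k) + BΠ₀U(k)`, `U(k+1) = Φ^{i_T(k)}(U(k),x(k))`. -/
def cloop {n m N : ℕ} [NeZero N] (A : Matrix (Fin n) (Fin n) ℝ)
    (B : Matrix (Fin n) (Fin m) ℝ)
    (kf : (Fin N → Fin m → ℝ) → (Fin n → ℝ) → Fin m → ℝ)
    (Ψo : (Fin N → Fin m → ℝ) → (Fin n → ℝ) → Fin N → Fin m → ℝ)
    (iT : ℕ → ℕ) (U0 : Fin N → Fin m → ℝ) (x0 : Fin n → ℝ) :
    ℕ → (Fin N → Fin m → ℝ) × (Fin n → ℝ)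
  | 0 => (U0, x0)
  | k + 1 =>
    (PhiIter A B kf Ψo (iT k) (cloop A B kf Ψo iT U0 x0 k).1 (cloop A B kf Ψo iT U0 x0 k).2,
      A.mulVec (cloop A B kf Ψo iT U0 x0 k).2 + B.mulVec ((cloop A B kf Ψo iT U0 x0 k).1 0))


lemma dot_swap {n m : ℕ} (M : Matrix (Fin n) (Fin m) ℝ) (a : Fin n → ℝ) (b : Fin m → ℝ) :
    a ⬝ᵥ M.mulVec b = b ⬝ᵥ Mᵀ.mulVec a := by
  rw [Matrix.dotProduct_mulVec, ← Matrix.mulVec_transpose, dotProduct_comm]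

lemma bellman {n m : ℕ} (A : Matrix (Fin n) (Fin n) ℝ) (B : Matrix (Fin n) (Fin m) ℝ)
    (Q : Matrix (Fin n) (Fin n) ℝ) (R : Matrix (Fin m) (Fin m) ℝ)
    (Puc : Matrix (Fin n) (Fin n) ℝ)
    (hRsymm : R.IsSymm) (hRpd : ∀ u : Fin m → ℝ, u ≠ 0 → 0 < u ⬝ᵥ R.mulVec u)
    (hPucsymm : Puc.IsSymm) (hPucpsd : ∀ x : Fin n → ℝ, 0 ≤ x ⬝ᵥ Puc.mulVec x)
    (hDARE : Puc = Aᵀ * Puc * A -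
      Aᵀ * Puc * B * (R + Bᵀ * Puc * B)⁻¹ * Bᵀ * Puc * A + Q)
    (x : Fin n → ℝ) (u : Fin m → ℝ) :
    x ⬝ᵥ Puc.mulVec x ≤ x ⬝ᵥ Q.mulVec x + u ⬝ᵥ R.mulVec u +
      (A.mulVec x + B.mulVec u) ⬝ᵥ Puc.mulVec (A.mulVec x + B.mulVec u) := by
  set S : Matrix (Fin m) (Fin m) ℝ := R + Bᵀ * Puc * B with hSdef
  have hBPB : ∀ z : Fin m → ℝ, z ⬝ᵥ (Bᵀ * Puc * B).mulVec z =
      (B.mulVec z) ⬝ᵥ Puc.mulVec (B.mulVec z) := by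
    intro z
    rw [Matrix.mul_assoc, ← Matrix.mulVec_mulVec, dot_swap, Matrix.transpose_transpose,
      ← Matrix.mulVec_mulVec, dotProduct_comm]
  have hSsymm : Sᵀ = S := by
    rw [hSdef, Matrix.transpose_add, hRsymm, Matrix.transpose_mul, Matrix.transpose_mul,
      Matrix.transpose_transpose, hPucsymm, Matrix.mul_assoc]
  have hSpd : S.PosDef := by
    refine posDef_iff_dotProduct_mulVec.mpr ⟨?_, fun z hz => ?_⟩
    · rw [Matrix.IsHermitian]
      ext i j
      simp only [Matrix.conjTranspose_apply, star_trivial]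
      exact congrFun (congrFun hSsymm i) j
    · have h1 : z ⬝ᵥ S.mulVec z = z ⬝ᵥ R.mulVec z + z ⬝ᵥ (Bᵀ * Puc * B).mulVec z := by
        rw [hSdef, Matrix.add_mulVec, dotProduct_add]
      have h4 := hPucpsd (B.mulVec z)
      have h5 := hRpd z hz
      show (0:ℝ) < z ⬝ᵥ S.mulVec z
      rw [h1, hBPB z]
      linarith
  have hSdet : IsUnit S.det := hSpd.det_pos.ne'.isUnit
  have hSS : S * S⁻¹ = 1 := Matrix.mul_nonsing_inv S hSdet
  have hSinvsymm : (S⁻¹)ᵀ = S⁻¹ := by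
    rw [Matrix.transpose_nonsing_inv, hSsymm]
  set M₀ : Matrix (Fin m) (Fin n) ℝ := Bᵀ * Puc * A with hM₀def
  set K : Matrix (Fin m) (Fin n) ℝ := S⁻¹ * M₀ with hKdef
  have hSK : S * K = M₀ := by rw [hKdef, ← Matrix.mul_assoc, hSS, Matrix.one_mul]
  set T : Matrix (Fin n) (Fin n) ℝ := Aᵀ * Puc * A with hTdef
  set D : Matrix (Fin n) (Fin n) ℝ := Aᵀ * Puc * B * S⁻¹ * Bᵀ * Puc * A with hDdef
  have hkey : Q + T - Puc = M₀ᵀ * K := by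
    have h2 : Q + T - Puc = D := by rw [hDARE]; abel
    rw [h2, hDdef, hKdef, hM₀def]
    have hM₀T : (Bᵀ * Puc * A)ᵀ = Aᵀ * Puc * B := by
      rw [Matrix.transpose_mul, Matrix.transpose_mul, Matrix.transpose_transpose,
        hPucsymm, Matrix.mul_assoc]
    rw [hM₀T]
    simp only [Matrix.mul_assoc]
  set z : Fin m → ℝ := u + K.mulVec x with hzdef
  have hexp : z ⬝ᵥ S.mulVec z = u ⬝ᵥ R.mulVec u + u ⬝ᵥ (Bᵀ * Puc * B).mulVec u
      + 2 * (u ⬝ᵥ M₀.mulVec x) + x ⬝ᵥ (M₀ᵀ * K).mulVec x := by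
    have e1 : u ⬝ᵥ S.mulVec (K.mulVec x) = u ⬝ᵥ M₀.mulVec x := by
      rw [Matrix.mulVec_mulVec, hSK]
    have e2 : (K.mulVec x) ⬝ᵥ S.mulVec u = u ⬝ᵥ M₀.mulVec x := by
      rw [dot_swap, hSsymm, e1]
    have e3 : (K.mulVec x) ⬝ᵥ S.mulVec (K.mulVec x) = x ⬝ᵥ (M₀ᵀ * K).mulVec x := by
      rw [Matrix.mulVec_mulVec, hSK, dot_swap, Matrix.mulVec_mulVec]
    have e4 : u ⬝ᵥ S.mulVec u = u ⬝ᵥ R.mulVec u + u ⬝ᵥ (Bᵀ * Puc * B).mulVec u := by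
      rw [hSdef, Matrix.add_mulVec, dotProduct_add]
    rw [hzdef, Matrix.mulVec_add, dotProduct_add, add_dotProduct, add_dotProduct,
      e1, e2, e3, e4]
    ring
  have hAx : (A.mulVec x) ⬝ᵥ Puc.mulVec (A.mulVec x) = x ⬝ᵥ T.mulVec x := by
    rw [Matrix.mulVec_mulVec, dot_swap, Matrix.mulVec_mulVec, Matrix.transpose_mul,
      hPucsymm, hTdef, Matrix.mul_assoc]
  have hcross1 : (B.mulVec u) ⬝ᵥ Puc.mulVec (A.mulVec x) = u ⬝ᵥ M₀.mulVec x := by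
    rw [Matrix.mulVec_mulVec, dot_swap, Matrix.mulVec_mulVec, dot_swap,
      Matrix.transpose_mul, Matrix.transpose_mul, hPucsymm, Matrix.transpose_mul,
      Matrix.transpose_transpose, hPucsymm, hM₀def, Matrix.mul_assoc]
  have hcross2 : (A.mulVec x) ⬝ᵥ Puc.mulVec (B.mulVec u) = u ⬝ᵥ M₀.mulVec x := by
    rw [dot_swap, hPucsymm, hcross1]
  have hquad : x ⬝ᵥ Q.mulVec x + x ⬝ᵥ T.mulVec x - x ⬝ᵥ Puc.mulVec x
      = x ⬝ᵥ (M₀ᵀ * K).mulVec x := by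
    rw [← hkey, Matrix.sub_mulVec, Matrix.add_mulVec, dotProduct_sub, dotProduct_add]
  have hzS : 0 ≤ z ⬝ᵥ S.mulVec z := by
    have := (posSemidef_iff_dotProduct_mulVec.mp hSpd.posSemidef).2 z
    simpa using this
  have hrhs : (A.mulVec x + B.mulVec u) ⬝ᵥ Puc.mulVec (A.mulVec x + B.mulVec u)
      = x ⬝ᵥ T.mulVec x + 2 * (u ⬝ᵥ M₀.mulVec x) + u ⬝ᵥ (Bᵀ * Puc * B).mulVec u := by
    rw [Matrix.mulVec_add, dotProduct_add, add_dotProduct, add_dotProduct,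
      hAx, hcross1, hcross2, hBPB]
    ring
  linarith [hexp, hquad, hzS, hrhs]

/-- Along closed-loop trajectories, the barrier function values are bounded by the
difference between the current cost and the unconstrained LQR value
`x(k)ᵀ P*_uc x(k)`. -/
theorem barrier_bounds_along_trajectory
    {n m N : ℕ} [NeZero N]
    (A : Matrix (Fin n) (Fin n) ℝ) (B : Matrix (Fin n) (Fin m) ℝ)
    (Q : Matrix (Fin n) (Fin n) ℝ) (R : Matrix (Fin m) (Fin m) ℝ)
    (P Puc : Matrix (Fin n) (Fin n) ℝ) (ε : ℝ) (hε : 0 < ε)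
    (Bx : (Fin n → ℝ) → ℝ) (Bu : (Fin m → ℝ) → ℝ)
    (kf : (Fin N → Fin m → ℝ) → (Fin n → ℝ) → Fin m → ℝ)
    (Ψo : (Fin N → Fin m → ℝ) → (Fin n → ℝ) → Fin N → Fin m → ℝ)
    (γ : (Fin N → Fin m → ℝ) → (Fin n → ℝ) → ℝ)
    (iT : ℕ → ℕ) (U0 : Fin N → Fin m → ℝ) (x0 : Fin n → ℝ)
    (hQsymm : Q.IsSymm) (hQpsd : ∀ x : Fin n → ℝ, 0 ≤ x ⬝ᵥ Q.mulVec x)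
    (hRsymm : R.IsSymm) (hRpd : ∀ u : Fin m → ℝ, u ≠ 0 → 0 < u ⬝ᵥ R.mulVec u)
    (hPsymm : P.IsSymm) (hPpd : ∀ x : Fin n → ℝ, x ≠ 0 → 0 < x ⬝ᵥ P.mulVec x)
    (hBxnonneg : ∀ x : Fin n → ℝ, 0 ≤ Bx x) (hBunonneg : ∀ u : Fin m → ℝ, 0 ≤ Bu u)
    (hshift : ∀ (u : Fin N → Fin m → ℝ) (x : Fin n → ℝ),
      mpcCost A B Q R P ε Bx Bu (shiftOp kf u x) (A.mulVec x + B.mulVec (u 0)) -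
          mpcCost A B Q R P ε Bx Bu u x ≤ -(stageCost Q R ε Bx Bu x (u 0)))
    (hopt : ∀ (u : Fin N → Fin m → ℝ) (x : Fin n → ℝ),
      mpcCost A B Q R P ε Bx Bu (Ψo u x) x - mpcCost A B Q R P ε Bx Bu u x ≤ -(γ u x))
    (hγnonneg : ∀ (u : Fin N → Fin m → ℝ) (x : Fin n → ℝ), 0 ≤ γ u x)
    (hJnonneg : ∀ (u : Fin N → Fin m → ℝ) (x : Fin n → ℝ),
      0 ≤ mpcCost A B Q R P ε Bx Bu u x)
    (hxconv : Filter.Tendsto (fun k => (cloop A B kf Ψo iT U0 x0 k).2)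
      Filter.atTop (nhds 0))
    (hPucsymm : Puc.IsSymm) (hPucpsd : ∀ x : Fin n → ℝ, 0 ≤ x ⬝ᵥ Puc.mulVec x)
    (hDARE : Puc = Aᵀ * Puc * A -
      Aᵀ * Puc * B * (R + Bᵀ * Puc * B)⁻¹ * Bᵀ * Puc * A + Q) :
    ∀ k : ℕ,
      ε * Bx (cloop A B kf Ψo iT U0 x0 k).2 ≤
        mpcCost A B Q R P ε Bx Bu (cloop A B kf Ψo iT U0 x0 k).1
            (cloop A B kf Ψo iT U0 x0 k).2 -
          (cloop A B kf Ψo iT U0 x0 k).2 ⬝ᵥ Puc.mulVec (cloop A B kf Ψo iT U0 x0 k).2 ∧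
      ε * Bu ((cloop A B kf Ψo iT U0 x0 k).1 0) ≤
        mpcCost A B Q R P ε Bx Bu (cloop A B kf Ψo iT U0 x0 k).1
            (cloop A B kf Ψo iT U0 x0 k).2 -
          (cloop A B kf Ψo iT U0 x0 k).2 ⬝ᵥ Puc.mulVec (cloop A B kf Ψo iT U0 x0 k).2 := by
  
  set x : ℕ → Fin n → ℝ := fun k => (cloop A B kf Ψo iT U0 x0 k).2 with hx
  set U : ℕ → Fin N → Fin m → ℝ := fun k => (cloop A B kf Ψo iT U0 x0 k).1 with hU
  set V : ℕ → ℝ := fun k => mpcCost A B Q R P ε Bx Bu (U k) (x k) with hV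
  have hxsucc : ∀ k, x (k+1) = A.mulVec (x k) + B.mulVec (U k 0) := fun k => rfl
  have hUsucc : ∀ k, U (k+1) = PhiIter A B kf Ψo (iT k) (U k) (x k) := fun k => rfl
  -- cost of iterated optimizer is at most cost of shift
  have hphi : ∀ (i : ℕ) (u : Fin N → Fin m → ℝ) (y : Fin n → ℝ),
      mpcCost A B Q R P ε Bx Bu (PhiIter A B kf Ψo i u y)
          (A.mulVec y + B.mulVec (u 0)) ≤
        mpcCost A B Q R P ε Bx Bu (shiftOp kf u y) (A.mulVec y + B.mulVec (u 0)) := by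
    intro i u y
    induction i with
    | zero => exact le_refl _
    | succ i ih =>
      have h1 := hopt (PhiIter A B kf Ψo i u y) (A.mulVec y + B.mulVec (u 0))
      have h2 := hγnonneg (PhiIter A B kf Ψo i u y) (A.mulVec y + B.mulVec (u 0))
      simp only [PhiIter]
      linarith
  -- value decrease along closed loop
  have hstep : ∀ k, V (k+1) ≤ V k - stageCost Q R ε Bx Bu (x k) (U k 0) := by
    intro k
    have h1 := hphi (iT k) (U k) (x k)
    have h2 := hshift (U k) (x k)
    have : V (k+1) = mpcCost A B Q R P ε Bx Bu (PhiIter A B kf Ψo (iT k) (U k) (x k))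
        (A.mulVec (x k) + B.mulVec (U k 0)) := by
      show mpcCost A B Q R P ε Bx Bu (U (k+1)) (x (k+1)) = _
      rw [hUsucc k, hxsucc k]
    rw [this]
    linarith
  -- Bellman inequality along trajectory
  have hstage : ∀ k, (x k) ⬝ᵥ Puc.mulVec (x k) - (x (k+1)) ⬝ᵥ Puc.mulVec (x (k+1))
      + ε * Bx (x k) + ε * Bu (U k 0) ≤ stageCost Q R ε Bx Bu (x k) (U k 0) := by
    intro k
    have hb := bellman A B Q R Puc hRsymm hRpd hPucsymm hPucpsd hDARE (x k) (U k 0)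
    rw [hxsucc k]
    unfold stageCost
    linarith
  -- main inductive bound
  have hmain : ∀ k j, k + 1 ≤ j →
      ε * Bx (x k) + ε * Bu (U k 0) + (x k) ⬝ᵥ Puc.mulVec (x k) ≤
        V k + (x j) ⬝ᵥ Puc.mulVec (x j) - V j := by
    intro k j hj
    induction j, hj using Nat.le_induction with
    | base =>
      have h1 := hstep k
      have h2 := hstage k
      linarith
    | succ j hj ih =>
      have h1 := hstep j
      have h2 := hstage j
      have h3 : 0 ≤ ε * Bx (x j) := mul_nonneg hε.le (hBxnonneg _)
      have h4 : 0 ≤ ε * Bu (U j 0) := mul_nonneg hε.le (hBunonneg _)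
      linarith
  -- the quadratic form along the trajectory tends to 0
  have hq : Continuous (fun y : Fin n → ℝ => y ⬝ᵥ Puc.mulVec y) := by
    simp only [dotProduct, Matrix.mulVec]
    fun_prop
  have hlim : Filter.Tendsto (fun j => (x j) ⬝ᵥ Puc.mulVec (x j))
      Filter.atTop (nhds 0) := by
    have := (hq.tendsto 0).comp hxconv
    simpa [Function.comp_def] using this
  -- conclude
  intro k
  have hbound : ε * Bx (x k) + ε * Bu (U k 0) + (x k) ⬝ᵥ Puc.mulVec (x k) ≤ V k := by
    have htend : Filter.Tendsto (fun j => V k + (x j) ⬝ᵥ Puc.mulVec (x j))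
        Filter.atTop (nhds (V k)) := by
      have := Filter.Tendsto.const_add (V k) hlim
      simpa using this
    refine ge_of_tendsto htend ?_
    filter_upwards [Filter.eventually_ge_atTop (k+1)] with j hj
    have h1 := hmain k j hj
    have h2 := hJnonneg (U j) (x j)
    show ε * Bx (x k) + ε * Bu (U k 0) + (x k) ⬝ᵥ Puc.mulVec (x k) ≤
      V k + (x j) ⬝ᵥ Puc.mulVec (x j)
    have : V j = mpcCost A B Q R P ε Bx Bu (U j) (x j) := rfl
    linarith
  have h3 : 0 ≤ ε * Bx (x k) := mul_nonneg hε.le (hBxnonneg _)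
  have h4 : 0 ≤ ε * Bu (U k 0) := mul_nonneg hε.le (hBunonneg _)
  constructor
  · show ε * Bx (x k) ≤ V k - (x k) ⬝ᵥ Puc.mulVec (x k)
    linarith
  · show ε * Bu (U k 0) ≤ V k - (x k) ⬝ᵥ Puc.mulVec (x k)
    linarith
end

section
/- Consider the closed-loop system and assume the shift decrease condition Ĵ_N(Ψ_s(U,x), Ax+BΠ₀U) − Ĵ_N(U,x) ≤ −ℓ̂(x,Π₀U) and the optimizer decrease condition Ĵ_N(Ψ_o(U,x),x) − Ĵ_N(U,x) ≤ −γ(U,x) with γ ≥ 0 hold for all (U,x), and let P*_uc be a symmetric positive semidefinite solution of the DARE P*_uc = AᵀP*_uc A − AᵀP*_uc B(R + BᵀP*_uc B)⁻¹BᵀP*_uc A + Q. Define α̂(k) := Ĵ_N(U(k),x(k)) − x(k)ᵀP*_uc x(k). Then for every k ∈ ℕ, with u(k) = Π₀U(k): α̂(k+1) − α̂(k) ≤ −ε·(B̂_x(x(k)) + B̂_u(u(k))); in particular, if B̂_x ≥ 0 and B̂_u ≥ 0 pointwise, the sequence α̂(k) is nonincreasing. -/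
open Matrix

private lemma tdot {p q : ℕ} (M : Matrix (Fin p) (Fin q) ℝ) (a : Fin q → ℝ) (b : Fin p → ℝ) :
    (M *ᵥ a) ⬝ᵥ b = a ⬝ᵥ (Mᵀ *ᵥ b) := by
  rw [Matrix.dotProduct_mulVec, Matrix.vecMul_transpose]

set_option maxHeartbeats 1000000 in
/-- Completion-of-squares nonnegativity from the DARE. -/
private lemma dare_quad_nonneg {n m : ℕ}
    (A : Matrix (Fin n) (Fin n) ℝ) (B : Matrix (Fin n) (Fin m) ℝ)
    (Q : Matrix (Fin n) (Fin n) ℝ) (R : Matrix (Fin m) (Fin m) ℝ)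
    (Puc : Matrix (Fin n) (Fin n) ℝ)
    (hRpd : ∀ u : Fin m → ℝ, u ≠ 0 → 0 < u ⬝ᵥ R.mulVec u)
    (hRsymm : R.IsSymm)
    (hPucsymm : Puc.IsSymm) (hPucpsd : ∀ x : Fin n → ℝ, 0 ≤ x ⬝ᵥ Puc.mulVec x)
    (hDARE : Puc = Aᵀ * Puc * A -
      Aᵀ * Puc * B * (R + Bᵀ * Puc * B)⁻¹ * Bᵀ * Puc * A + Q)
    (x : Fin n → ℝ) (u : Fin m → ℝ) :
    0 ≤ x ⬝ᵥ Q *ᵥ x + u ⬝ᵥ R *ᵥ u +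
      (A *ᵥ x + B *ᵥ u) ⬝ᵥ Puc *ᵥ (A *ᵥ x + B *ᵥ u) - x ⬝ᵥ Puc *ᵥ x := by
  set S := R + Bᵀ * Puc * B with hSdef
  have hSsymm : Sᵀ = S := by
    rw [hSdef, Matrix.transpose_add, hRsymm.eq, Matrix.transpose_mul,
      Matrix.transpose_mul, Matrix.transpose_transpose, hPucsymm.eq, Matrix.mul_assoc]
  have hquadS : ∀ v : Fin m → ℝ, v ⬝ᵥ S *ᵥ v = v ⬝ᵥ R *ᵥ v + (B *ᵥ v) ⬝ᵥ Puc *ᵥ (B *ᵥ v) := by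
    intro v
    rw [hSdef, Matrix.add_mulVec, dotProduct_add, tdot B v (Puc *ᵥ (B *ᵥ v)),
      Matrix.mulVec_mulVec, Matrix.mulVec_mulVec]
  have hSpos : ∀ v : Fin m → ℝ, v ≠ 0 → 0 < v ⬝ᵥ S *ᵥ v := by
    intro v hv
    rw [hquadS v]
    have := hPucpsd (B *ᵥ v)
    have := hRpd v hv
    linarith
  have hSnn : ∀ v : Fin m → ℝ, 0 ≤ v ⬝ᵥ S *ᵥ v := by
    intro v
    by_cases hv : v = 0
    · simp [hv]
    · exact (hSpos v hv).le
  have hSpd : S.PosDef := by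
    refine Matrix.PosDef.of_dotProduct_mulVec_pos ?_ (fun v hv => by simpa using hSpos v hv)
    rw [Matrix.IsHermitian, Matrix.conjTranspose_eq_transpose_of_trivial, hSsymm]
  have hdet : IsUnit S.det := hSpd.det_pos.ne'.isUnit
  set K : Matrix (Fin m) (Fin n) ℝ := S⁻¹ * (Bᵀ * (Puc * A)) with hKdef
  have hSK : S * K = Bᵀ * (Puc * A) := by
    rw [hKdef, ← Matrix.mul_assoc, Matrix.mul_nonsing_inv S hdet, Matrix.one_mul]
  have hKtS : Kᵀ * S = Aᵀ * (Puc * B) := by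
    have h1 : (S * K)ᵀ = (Bᵀ * (Puc * A))ᵀ := congrArg Matrix.transpose hSK
    rw [Matrix.transpose_mul] at h1
    rw [hSsymm] at h1
    rw [h1]
    simp only [Matrix.transpose_mul, Matrix.transpose_transpose, hPucsymm.eq,
      Matrix.mul_assoc]
  have hKtSK : Kᵀ * S * K = Aᵀ * (Puc * (B * (S⁻¹ * (Bᵀ * (Puc * A))))) := by
    rw [hKtS, hKdef]
    simp only [Matrix.mul_assoc]
  -- the atoms
  set t1 := x ⬝ᵥ Puc *ᵥ x with ht1
  set t2 := x ⬝ᵥ (Aᵀ * (Puc * A)) *ᵥ x with ht2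
  set t3 := x ⬝ᵥ (Aᵀ * (Puc * (B * (S⁻¹ * (Bᵀ * (Puc * A)))))) *ᵥ x with ht3
  set t4 := x ⬝ᵥ (Aᵀ * (Puc * B)) *ᵥ u with ht4
  set t5 := u ⬝ᵥ R *ᵥ u with ht5
  set t6 := u ⬝ᵥ (Bᵀ * (Puc * B)) *ᵥ u with ht6
  have hflip : u ⬝ᵥ (Bᵀ * (Puc * A)) *ᵥ x = t4 := by
    rw [dotProduct_comm, tdot]
    simp only [Matrix.transpose_mul, Matrix.transpose_transpose, hPucsymm.eq,
      Matrix.mul_assoc]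
    exact ht4.symm
  have hQeq : x ⬝ᵥ Q *ᵥ x = t1 - t2 + t3 := by
    have hQ0 : Q = Puc - (Aᵀ * Puc * A - Aᵀ * Puc * B * S⁻¹ * Bᵀ * Puc * A) :=
      eq_sub_of_add_eq (by rw [add_comm]; exact hDARE.symm)
    have hQ : Q = Puc - Aᵀ * (Puc * A) + Aᵀ * (Puc * (B * (S⁻¹ * (Bᵀ * (Puc * A))))) := by
      rw [hQ0]
      simp only [Matrix.mul_assoc]
      abel
    rw [hQ, Matrix.add_mulVec, Matrix.sub_mulVec, dotProduct_add,
      dotProduct_sub, ht1, ht2, ht3]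
  have hcross : (A *ᵥ x + B *ᵥ u) ⬝ᵥ Puc *ᵥ (A *ᵥ x + B *ᵥ u) = t2 + 2 * t4 + t6 := by
    rw [Matrix.mulVec_add, dotProduct_add, add_dotProduct,
      add_dotProduct]
    rw [tdot A x (Puc *ᵥ (A *ᵥ x)), tdot A x (Puc *ᵥ (B *ᵥ u)),
      tdot B u (Puc *ᵥ (A *ᵥ x)), tdot B u (Puc *ᵥ (B *ᵥ u))]
    simp only [Matrix.mulVec_mulVec, Matrix.mul_assoc]
    rw [ht2, ht4, ht6, hflip]
    ring
  have hrhs : (u + K *ᵥ x) ⬝ᵥ S *ᵥ (u + K *ᵥ x) = t5 + t6 + 2 * t4 + t3 := by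
    rw [Matrix.mulVec_add, dotProduct_add, add_dotProduct,
      add_dotProduct]
    have e1 : u ⬝ᵥ S *ᵥ u = t5 + t6 := by
      rw [hquadS u, tdot B u (Puc *ᵥ (B *ᵥ u))]
      simp only [Matrix.mulVec_mulVec, Matrix.mul_assoc]
      rfl
    have e2 : u ⬝ᵥ S *ᵥ (K *ᵥ x) = t4 := by
      rw [Matrix.mulVec_mulVec, hSK, hflip]
    have e3 : (K *ᵥ x) ⬝ᵥ S *ᵥ u = t4 := by
      rw [tdot K x (S *ᵥ u), Matrix.mulVec_mulVec, hKtS]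
    have e4 : (K *ᵥ x) ⬝ᵥ S *ᵥ (K *ᵥ x) = t3 := by
      rw [tdot K x (S *ᵥ (K *ᵥ x)), Matrix.mulVec_mulVec, Matrix.mulVec_mulVec, hKtSK]
    rw [e1, e2, e3, e4]; ring
  have hnn := hSnn (u + K *ᵥ x)
  rw [hrhs] at hnn
  rw [hQeq, hcross, ht5]
  linarith

/-- Along closed-loop trajectories, the quantity
`α̂(k) = Ĵ_N(U(k),x(k)) − x(k)ᵀ P*_uc x(k)` decreases by at least
`ε(B̂_x(x(k)) + B̂_u(u(k)))` at each step; in particular it is nonincreasing whenever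
the barrier functions are pointwise nonnegative. -/
theorem alpha_monotone_decrease
    {n m N : ℕ} [NeZero N]
    (A : Matrix (Fin n) (Fin n) ℝ) (B : Matrix (Fin n) (Fin m) ℝ)
    (Q : Matrix (Fin n) (Fin n) ℝ) (R : Matrix (Fin m) (Fin m) ℝ)
    (P Puc : Matrix (Fin n) (Fin n) ℝ) (ε : ℝ) (hε : 0 < ε)
    (Bx : (Fin n → ℝ) → ℝ) (Bu : (Fin m → ℝ) → ℝ)
    (kf : (Fin N → Fin m → ℝ) → (Fin n → ℝ) → Fin m → ℝ)
    (Ψo : (Fin N → Fin m → ℝ) → (Fin n → ℝ) → Fin N → Fin m → ℝ)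
    (γ : (Fin N → Fin m → ℝ) → (Fin n → ℝ) → ℝ)
    (iT : ℕ → ℕ) (U0 : Fin N → Fin m → ℝ) (x0 : Fin n → ℝ)
    (hQsymm : Q.IsSymm) (hQpsd : ∀ x : Fin n → ℝ, 0 ≤ x ⬝ᵥ Q.mulVec x)
    (hRsymm : R.IsSymm) (hRpd : ∀ u : Fin m → ℝ, u ≠ 0 → 0 < u ⬝ᵥ R.mulVec u)
    (hPsymm : P.IsSymm) (hPpd : ∀ x : Fin n → ℝ, x ≠ 0 → 0 < x ⬝ᵥ P.mulVec x)
    (hshift : ∀ (u : Fin N → Fin m → ℝ) (x : Fin n → ℝ),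
      mpcCost A B Q R P ε Bx Bu (shiftOp kf u x) (A.mulVec x + B.mulVec (u 0)) -
          mpcCost A B Q R P ε Bx Bu u x ≤ -(stageCost Q R ε Bx Bu x (u 0)))
    (hopt : ∀ (u : Fin N → Fin m → ℝ) (x : Fin n → ℝ),
      mpcCost A B Q R P ε Bx Bu (Ψo u x) x - mpcCost A B Q R P ε Bx Bu u x ≤ -(γ u x))
    (hγnonneg : ∀ (u : Fin N → Fin m → ℝ) (x : Fin n → ℝ), 0 ≤ γ u x)
    (hPucsymm : Puc.IsSymm) (hPucpsd : ∀ x : Fin n → ℝ, 0 ≤ x ⬝ᵥ Puc.mulVec x)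
    (hDARE : Puc = Aᵀ * Puc * A -
      Aᵀ * Puc * B * (R + Bᵀ * Puc * B)⁻¹ * Bᵀ * Puc * A + Q) :
    (∀ k : ℕ,
      (mpcCost A B Q R P ε Bx Bu (cloop A B kf Ψo iT U0 x0 (k + 1)).1
          (cloop A B kf Ψo iT U0 x0 (k + 1)).2 -
        (cloop A B kf Ψo iT U0 x0 (k + 1)).2 ⬝ᵥ
          Puc.mulVec (cloop A B kf Ψo iT U0 x0 (k + 1)).2) -
      (mpcCost A B Q R P ε Bx Bu (cloop A B kf Ψo iT U0 x0 k).1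
          (cloop A B kf Ψo iT U0 x0 k).2 -
        (cloop A B kf Ψo iT U0 x0 k).2 ⬝ᵥ
          Puc.mulVec (cloop A B kf Ψo iT U0 x0 k).2) ≤
      -(ε * (Bx (cloop A B kf Ψo iT U0 x0 k).2 +
             Bu ((cloop A B kf Ψo iT U0 x0 k).1 0)))) ∧
    ((∀ x : Fin n → ℝ, 0 ≤ Bx x) → (∀ u : Fin m → ℝ, 0 ≤ Bu u) →
      ∀ k : ℕ,
        mpcCost A B Q R P ε Bx Bu (cloop A B kf Ψo iT U0 x0 (k + 1)).1
            (cloop A B kf Ψo iT U0 x0 (k + 1)).2 -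
          (cloop A B kf Ψo iT U0 x0 (k + 1)).2 ⬝ᵥ
            Puc.mulVec (cloop A B kf Ψo iT U0 x0 (k + 1)).2 ≤
        mpcCost A B Q R P ε Bx Bu (cloop A B kf Ψo iT U0 x0 k).1
            (cloop A B kf Ψo iT U0 x0 k).2 -
          (cloop A B kf Ψo iT U0 x0 k).2 ⬝ᵥ
            Puc.mulVec (cloop A B kf Ψo iT U0 x0 k).2) := by
  classical
  have hquad := dare_quad_nonneg A B Q R Puc hRpd hRsymm hPucsymm hPucpsd hDARE
  -- iterated decrease
  have hphi : ∀ (i : ℕ) (u : Fin N → Fin m → ℝ) (x : Fin n → ℝ),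
      mpcCost A B Q R P ε Bx Bu (PhiIter A B kf Ψo i u x) (A.mulVec x + B.mulVec (u 0)) ≤
        mpcCost A B Q R P ε Bx Bu u x - stageCost Q R ε Bx Bu x (u 0) := by
    intro i
    induction i with
    | zero =>
      intro u x
      have := hshift u x
      simp only [PhiIter]
      linarith
    | succ i ih =>
      intro u x
      have h1 := ih u x
      have h2 := hopt (PhiIter A B kf Ψo i u x) (A.mulVec x + B.mulVec (u 0))
      have h3 := hγnonneg (PhiIter A B kf Ψo i u x) (A.mulVec x + B.mulVec (u 0))
      simp only [PhiIter]
      linarith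
  have key : ∀ k : ℕ,
      (mpcCost A B Q R P ε Bx Bu (cloop A B kf Ψo iT U0 x0 (k + 1)).1
          (cloop A B kf Ψo iT U0 x0 (k + 1)).2 -
        (cloop A B kf Ψo iT U0 x0 (k + 1)).2 ⬝ᵥ
          Puc.mulVec (cloop A B kf Ψo iT U0 x0 (k + 1)).2) -
      (mpcCost A B Q R P ε Bx Bu (cloop A B kf Ψo iT U0 x0 k).1
          (cloop A B kf Ψo iT U0 x0 k).2 -
        (cloop A B kf Ψo iT U0 x0 k).2 ⬝ᵥ
          Puc.mulVec (cloop A B kf Ψo iT U0 x0 k).2) ≤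
      -(ε * (Bx (cloop A B kf Ψo iT U0 x0 k).2 +
             Bu ((cloop A B kf Ψo iT U0 x0 k).1 0))) := by
    intro k
    set Uk := (cloop A B kf Ψo iT U0 x0 k).1 with hUk
    set xk := (cloop A B kf Ψo iT U0 x0 k).2 with hxk
    have hc1 : (cloop A B kf Ψo iT U0 x0 (k + 1)).1 = PhiIter A B kf Ψo (iT k) Uk xk := rfl
    have hc2 : (cloop A B kf Ψo iT U0 x0 (k + 1)).2 = A.mulVec xk + B.mulVec (Uk 0) := rfl
    rw [hc1, hc2]
    have h1 := hphi (iT k) Uk xk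
    have h2 := hquad xk (Uk 0)
    simp only [stageCost] at h1
    set xp := A.mulVec xk + B.mulVec (Uk 0) with hxp
    have h2' : 0 ≤ xk ⬝ᵥ Q *ᵥ xk + (Uk 0) ⬝ᵥ R *ᵥ (Uk 0) + xp ⬝ᵥ Puc *ᵥ xp - xk ⬝ᵥ Puc *ᵥ xk := h2
    linarith
  refine ⟨key, fun hBx hBu k => ?_⟩
  have h1 := key k
  have h2 := hBx (cloop A B kf Ψo iT U0 x0 k).2
  have h3 := hBu ((cloop A B kf Ψo iT U0 x0 k).1 0)
  nlinarith
end
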